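/- arXiv:1605.07570 — 5 statements merged into one kernel-verified Lean document; each statement's English description precedes it below -/
import Mathlib

section
/- Let 0 < δ < 1/2 be a constant. There is a constant C such that for all n ≥ 2 and all m with δn² ≤ m ≤ (1−δ)n², writing p_m = m/n², one has | log( (m)_n / (n²)_n ) − n log p_m + (1 − p_m)/(2 p_m) | ≤ C/n. That is, (m)_n / (n²)_n = p_m^n · exp( −(1 − p_m)/(2 p_m) + O(1/n) ). -/
lemma logAux (x : ℝ) (h0 : 0 ≤ x) (h1 : x ≤ 1/2) : |Real.log (1-x) + x| ≤ 2*x^2 := by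
  have h1x : 0 < 1 - x := by linarith
  have hup : Real.log (1-x) ≤ -x := by
    have := Real.log_le_sub_one_of_pos h1x; linarith
  have hlo : -(x + 2*x^2) ≤ Real.log (1-x) := by
    have h2 : Real.log (1-x)⁻¹ ≤ (1-x)⁻¹ - 1 := Real.log_le_sub_one_of_pos (by positivity)
    rw [Real.log_inv] at h2
    have h3 : (1-x)⁻¹ - 1 ≤ x + 2*x^2 := by
      rw [inv_eq_one_div, div_sub' (ne_of_gt h1x), div_le_iff₀ h1x]
      nlinarith
    linarith
  rw [abs_le]; constructor <;> nlinarith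

lemma sum_log_sub (n : ℕ) (a : ℝ) (hn : 2 ≤ n) (ha : 2 * (n:ℝ) ≤ a) :
    |(∑ i ∈ Finset.range n, Real.log (1 - (i:ℝ)/a)) + (n:ℝ)*((n:ℝ)-1)/(2*a)|
      ≤ 2*(n:ℝ)^3/a^2 := by
  have hn0 : (0:ℝ) < n := by exact_mod_cast Nat.lt_of_lt_of_le Nat.zero_lt_two hn
  have ha0 : (0:ℝ) < a := by linarith
  have hgauss : (∑ i ∈ Finset.range n, (i:ℝ)) = (n:ℝ)*((n:ℝ)-1)/2 := by
    have := Finset.sum_range_id_mul_two n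
    have h2 := congrArg (Nat.cast : ℕ → ℝ) this
    push_cast [Nat.cast_sub (show 1 ≤ n by omega)] at h2
    linarith
  have hrw : (n:ℝ)*((n:ℝ)-1)/(2*a) = ∑ i ∈ Finset.range n, (i:ℝ)/a := by
    rw [← Finset.sum_div, hgauss]; ring
  rw [hrw, ← Finset.sum_add_distrib]
  calc |∑ i ∈ Finset.range n, (Real.log (1 - (i:ℝ)/a) + (i:ℝ)/a)|
      ≤ ∑ i ∈ Finset.range n, |Real.log (1 - (i:ℝ)/a) + (i:ℝ)/a| :=
        Finset.abs_sum_le_sum_abs _ _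
    _ ≤ ∑ i ∈ Finset.range n, 2*((n:ℝ)/a)^2 := by
        apply Finset.sum_le_sum
        intro i hi
        have hi' : (i:ℝ) < n := by exact_mod_cast Finset.mem_range.mp hi
        have hx0 : 0 ≤ (i:ℝ)/a := by positivity
        have hx1 : (i:ℝ)/a ≤ 1/2 := by
          rw [div_le_iff₀ ha0]; nlinarith
        calc |Real.log (1 - (i:ℝ)/a) + (i:ℝ)/a| ≤ 2*((i:ℝ)/a)^2 := logAux _ hx0 hx1
          _ ≤ 2*((n:ℝ)/a)^2 := by
              gcongr
    _ = 2*(n:ℝ)^3/a^2 := by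
        rw [Finset.sum_const, Finset.card_range]
        rw [nsmul_eq_mul]; ring

set_option maxHeartbeats 1000000 in
lemma main_large (δ : ℝ) (hδ0 : 0 < δ) (n m : ℕ) (hn2 : 2 ≤ n) (hδn : 2 ≤ δ * n)
    (hm1 : δ * (n:ℝ)^2 ≤ m) (hm2 : (m:ℝ) ≤ (1-δ) * (n:ℝ)^2) :
    |Real.log ((Nat.descFactorial m n : ℝ) / (Nat.descFactorial (n ^ 2) n : ℝ))
        - (n : ℝ) * Real.log ((m : ℝ) / (n : ℝ) ^ 2)
        + (1 - (m : ℝ) / (n : ℝ) ^ 2) / (2 * ((m : ℝ) / (n : ℝ) ^ 2))|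
      ≤ (2/δ^2 + 1/(2*δ) + 3) / n := by
  have hn0 : (0:ℝ) < n := by positivity
  have hm2n : 2*(n:ℝ) ≤ m := by nlinarith
  have hmn : n ≤ m := by exact_mod_cast le_trans (by linarith : (n:ℝ) ≤ 2*n) hm2n
  have hm0 : (0:ℝ) < m := by linarith
  have hnn2 : n ≤ n^2 := Nat.le_self_pow two_ne_zero n
  have ht : |(n:ℝ)/(2*(m:ℝ)) - 1/(2*(n:ℝ))| ≤ 1/(2*δ*(n:ℝ)) + 1/(2*(n:ℝ)) := by
    refine (abs_sub _ _).trans ?_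
    rw [abs_of_nonneg (by positivity), abs_of_nonneg (by positivity)]
    have h1 : (n:ℝ)/(2*(m:ℝ)) ≤ 1/(2*δ*(n:ℝ)) := by
      rw [div_le_div_iff₀ (by positivity) (by positivity)]
      nlinarith
    linarith
  have hn20 : (0:ℝ) < (n:ℝ)^2 := by positivity
  -- cast descFactorials to real products
  have hdm : (Nat.descFactorial m n : ℝ) = ∏ i ∈ Finset.range n, ((m:ℝ) - i) := by
    rw [Nat.descFactorial_eq_prod_range, Nat.cast_prod]
    refine Finset.prod_congr rfl fun i hi => ?_
    have h : i ≤ m := le_trans (Finset.mem_range.mp hi).le hmn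
    exact Nat.cast_sub h
  have hdn : (Nat.descFactorial (n^2) n : ℝ) = ∏ i ∈ Finset.range n, ((n:ℝ)^2 - i) := by
    rw [Nat.descFactorial_eq_prod_range, Nat.cast_prod]
    refine Finset.prod_congr rfl fun i hi => ?_
    have : i ≤ n^2 := le_trans (Finset.mem_range.mp hi).le hnn2
    have h : (((n^2 - i : ℕ)) : ℝ) = ((n^2 : ℕ) : ℝ) - i := Nat.cast_sub this
    push_cast at h ⊢
    exact h
  have hfac1 : ∀ i ∈ Finset.range n, (0:ℝ) < (m:ℝ) - i := by
    intro i hi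
    have : (i:ℝ) < n := by exact_mod_cast Finset.mem_range.mp hi
    linarith
  have hfac2 : ∀ i ∈ Finset.range n, (0:ℝ) < (n:ℝ)^2 - i := by
    intro i hi
    have : (i:ℝ) < n := by exact_mod_cast Finset.mem_range.mp hi
    nlinarith
  have hP1 : (0:ℝ) < ∏ i ∈ Finset.range n, ((m:ℝ) - i) := Finset.prod_pos hfac1
  have hP2 : (0:ℝ) < ∏ i ∈ Finset.range n, ((n:ℝ)^2 - i) := Finset.prod_pos hfac2
  set A := ∑ i ∈ Finset.range n, Real.log (1 - (i:ℝ)/m) with hA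
  set B := ∑ i ∈ Finset.range n, Real.log (1 - (i:ℝ)/(n:ℝ)^2) with hB
  have hsum1 : ∑ i ∈ Finset.range n, Real.log ((m:ℝ) - i)
      = n * Real.log m + A := by
    have : ∀ i ∈ Finset.range n, Real.log ((m:ℝ) - i)
        = Real.log m + Real.log (1 - (i:ℝ)/m) := by
      intro i hi
      rw [← Real.log_mul hm0.ne' (by
        have := hfac1 i hi
        intro h
        apply (hfac1 i hi).ne'
        have : (m:ℝ) * (1 - (i:ℝ)/m) = (m:ℝ) - i := by field_simp
        linarith [this ▸ (mul_eq_zero_of_right (m:ℝ) h)])]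
      congr 1
      field_simp
    rw [Finset.sum_congr rfl this, Finset.sum_add_distrib, Finset.sum_const,
      Finset.card_range, nsmul_eq_mul]
  have hsum2 : ∑ i ∈ Finset.range n, Real.log ((n:ℝ)^2 - i)
      = n * Real.log ((n:ℝ)^2) + B := by
    have : ∀ i ∈ Finset.range n, Real.log ((n:ℝ)^2 - i)
        = Real.log ((n:ℝ)^2) + Real.log (1 - (i:ℝ)/(n:ℝ)^2) := by
      intro i hi
      rw [← Real.log_mul hn20.ne' (by
        intro h
        apply (hfac2 i hi).ne'
        have : (n:ℝ)^2 * (1 - (i:ℝ)/(n:ℝ)^2) = (n:ℝ)^2 - i := by field_simp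
        linarith [this ▸ (mul_eq_zero_of_right ((n:ℝ)^2) h)])]
      congr 1
      field_simp
    rw [Finset.sum_congr rfl this, Finset.sum_add_distrib, Finset.sum_const,
      Finset.card_range, nsmul_eq_mul]
  have key : Real.log ((Nat.descFactorial m n : ℝ) / (Nat.descFactorial (n ^ 2) n : ℝ))
        - (n : ℝ) * Real.log ((m : ℝ) / (n : ℝ) ^ 2)
        + (1 - (m : ℝ) / (n : ℝ) ^ 2) / (2 * ((m : ℝ) / (n : ℝ) ^ 2))
      = (A + (n:ℝ)*((n:ℝ)-1)/(2*m)) - (B + (n:ℝ)*((n:ℝ)-1)/(2*(n:ℝ)^2))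
        + ((n:ℝ)/(2*m) - 1/(2*n)) := by
    rw [hdm, hdn, Real.log_div hP1.ne' hP2.ne',
      Real.log_prod (fun i hi => (hfac1 i hi).ne'),
      Real.log_prod (fun i hi => (hfac2 i hi).ne'),
      hsum1, hsum2, Real.log_div hm0.ne' hn20.ne']
    field_simp
    ring
  rw [key]
  have hE1 : |A + (n:ℝ)*((n:ℝ)-1)/(2*(m:ℝ))| ≤ 2/(δ^2*(n:ℝ)) := by
    refine (sum_log_sub n (m:ℝ) hn2 hm2n).trans ?_
    rw [div_le_div_iff₀ (by positivity) (by positivity)]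
    nlinarith [mul_le_mul hm1 hm1 (by positivity) hm0.le]
  have hE2 : |B + (n:ℝ)*((n:ℝ)-1)/(2*(n:ℝ)^2)| ≤ 2/(n:ℝ) := by
    have hn2' : (2:ℝ) ≤ n := by exact_mod_cast hn2
    refine (sum_log_sub n ((n:ℝ)^2) hn2 (by nlinarith)).trans ?_
    rw [div_le_div_iff₀ (by positivity) (by positivity)]
    have h : 2*(n:ℝ)^3*(n:ℝ) = 2*(((n:ℝ)^2)^2) := by ring
    linarith
  have habs : |A + (n:ℝ)*((n:ℝ)-1)/(2*(m:ℝ)) - (B + (n:ℝ)*((n:ℝ)-1)/(2*(n:ℝ)^2))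
      + ((n:ℝ)/(2*(m:ℝ)) - 1/(2*(n:ℝ)))|
      ≤ |A + (n:ℝ)*((n:ℝ)-1)/(2*(m:ℝ))| + |B + (n:ℝ)*((n:ℝ)-1)/(2*(n:ℝ)^2)|
        + |(n:ℝ)/(2*(m:ℝ)) - 1/(2*(n:ℝ))| := by
    have h3 := abs_add_three (A + (n:ℝ)*((n:ℝ)-1)/(2*(m:ℝ)))
      (-(B + (n:ℝ)*((n:ℝ)-1)/(2*(n:ℝ)^2))) ((n:ℝ)/(2*(m:ℝ)) - 1/(2*(n:ℝ)))
    rw [abs_neg] at h3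
    have he : A + (n:ℝ)*((n:ℝ)-1)/(2*(m:ℝ)) - (B + (n:ℝ)*((n:ℝ)-1)/(2*(n:ℝ)^2))
        + ((n:ℝ)/(2*(m:ℝ)) - 1/(2*(n:ℝ)))
        = A + (n:ℝ)*((n:ℝ)-1)/(2*(m:ℝ)) + -(B + (n:ℝ)*((n:ℝ)-1)/(2*(n:ℝ)^2))
        + ((n:ℝ)/(2*(m:ℝ)) - 1/(2*(n:ℝ))) := by ring
    rw [he]
    exact h3
  have hfin : 2/(δ^2*(n:ℝ)) + 2/(n:ℝ) + (1/(2*δ*(n:ℝ)) + 1/(2*(n:ℝ)))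
      ≤ (2/δ^2 + 1/(2*δ) + 3)/(n:ℝ) := by
    have heq : 2/(δ^2*(n:ℝ)) + 2/(n:ℝ) + (1/(2*δ*(n:ℝ)) + 1/(2*(n:ℝ)))
        = (2/δ^2 + 1/(2*δ) + 5/2)/(n:ℝ) := by
      field_simp
      ring
    rw [heq]
    gcongr
    norm_num
  calc _ ≤ _ := habs
    _ ≤ 2/(δ^2*(n:ℝ)) + 2/(n:ℝ) + (1/(2*δ*(n:ℝ)) + 1/(2*(n:ℝ))) := by
        gcongr
    _ ≤ _ := hfin


set_option maxHeartbeats 1000000 in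
/-- For `0 < δ < 1/2` there is a constant `C` such that for all `n ≥ 2` and all
`δ n² ≤ m ≤ (1-δ) n²`, writing `p_m = m/n²`,
`| log((m)_n / (n²)_n) - n log p_m + (1 - p_m)/(2 p_m) | ≤ C/n`; that is,
`(m)_n / (n²)_n = p_m^n exp(-(1-p_m)/(2p_m) + O(1/n))`. -/
theorem descFactorial_ratio_estimate (δ : ℝ) (hδ0 : 0 < δ) (hδ1 : δ < 1 / 2) :
    ∃ C : ℝ, ∀ n m : ℕ, 2 ≤ n →
      δ * (n : ℝ) ^ 2 ≤ (m : ℝ) → (m : ℝ) ≤ (1 - δ) * (n : ℝ) ^ 2 →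
      |Real.log ((Nat.descFactorial m n : ℝ) / (Nat.descFactorial (n ^ 2) n : ℝ))
          - (n : ℝ) * Real.log ((m : ℝ) / (n : ℝ) ^ 2)
          + (1 - (m : ℝ) / (n : ℝ) ^ 2) / (2 * ((m : ℝ) / (n : ℝ) ^ 2))|
        ≤ C / n := by
  classical
  set F : ℕ → ℕ → ℝ := fun n m =>
    Real.log ((Nat.descFactorial m n : ℝ) / (Nat.descFactorial (n ^ 2) n : ℝ))
      - (n : ℝ) * Real.log ((m : ℝ) / (n : ℝ) ^ 2)
      + (1 - (m : ℝ) / (n : ℝ) ^ 2) / (2 * ((m : ℝ) / (n : ℝ) ^ 2)) with hF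
  set N : ℕ := ⌈2/δ⌉₊ + 1 with hNdef
  set S : ℕ := (((Finset.range N) ×ˢ (Finset.range (N^2))).sup
      (fun p => ⌈(p.1:ℝ) * |F p.1 p.2|⌉₊)) with hS
  refine ⟨max (2/δ^2 + 1/(2*δ) + 3) (S:ℝ), fun n m hn hm1 hm2 => ?_⟩
  have hn0 : (0:ℝ) < n := by positivity
  show |F n m| ≤ _
  by_cases hc : 2 ≤ δ * n
  · calc |F n m| ≤ (2/δ^2 + 1/(2*δ) + 3) / n :=
        main_large δ hδ0 n m hn hc hm1 hm2
      _ ≤ _ := by gcongr; exact le_max_left _ _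
  · push_neg at hc
    have hnN : n < N := by
      have h1 : (n:ℝ) < 2/δ := by
        rw [lt_div_iff₀ hδ0]; linarith [mul_comm δ (n:ℝ)]
      have h2 : (n:ℝ) < (⌈2/δ⌉₊:ℝ) + 1 := lt_of_lt_of_le h1
        (le_trans (Nat.le_ceil _) (by linarith))
      have : (n:ℝ) < (N:ℝ) := by rw [hNdef]; push_cast; linarith
      exact_mod_cast this
    have hmN : m < N^2 := by
      have h1 : (m:ℝ) < (n:ℝ)^2 := lt_of_le_of_lt hm2 (by nlinarith [mul_pos hδ0 (by positivity : (0:ℝ) < (n:ℝ)^2)])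
      have h2 : m < n^2 := by exact_mod_cast (by push_cast; linarith : (m:ℝ) < ((n^2:ℕ):ℝ))
      exact lt_of_lt_of_le h2 (Nat.pow_le_pow_left hnN.le 2)
    have hmem : (n, m) ∈ (Finset.range N) ×ˢ (Finset.range (N^2)) := by
      simp [Finset.mem_product, hnN, hmN]
    have hle : ⌈(n:ℝ) * |F n m|⌉₊ ≤ S :=
      Finset.le_sup (f := fun p : ℕ × ℕ => ⌈(p.1:ℝ) * |F p.1 p.2|⌉₊) hmem
    have hle' : (n:ℝ) * |F n m| ≤ (S:ℝ) :=
      le_trans (Nat.le_ceil _) (by exact_mod_cast hle)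
    rw [le_div_iff₀ hn0]
    calc |F n m| * n = (n:ℝ) * |F n m| := by ring
      _ ≤ (S:ℝ) := hle'
      _ ≤ _ := le_max_right _ _
end

section
/- Let n ≥ 1 and k ≥ 2 be natural numbers and let ℓ_2, …, ℓ_k be nonnegative integers. The number N_L of ordered k-tuples (σ_1,…,σ_k) of permutations of [n] such that for every 2 ≤ t ≤ k the graph of σ_t meets the union of the graphs of σ_1,…,σ_{t−1} in exactly ℓ_t edges (i.e. |graph(σ_t) ∩ ∪_{j<t} graph(σ_j)| = ℓ_t) satisfies N_L ≤ (n!)^k · Π_{t=2}^k (t−1)^{ℓ_t} / ℓ_t!. -/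
open Finset

/-- The graph of a permutation `σ` of `[n]`: the set `{(i, σ i) : i ∈ [n]}`. -/
def permGraph (n : ℕ) (σ : Equiv.Perm (Fin n)) : Finset (Fin n × Fin n) :=
  Finset.univ.image (fun i => (i, σ i))

lemma card_perm_eq_on_le (n : ℕ) (A : Finset (Fin n)) (v : Fin n → Fin n) :
    (Finset.univ.filter (fun σ : Equiv.Perm (Fin n) => ∀ i ∈ A, σ i = v i)).card
      ≤ (n - A.card).factorial := by
  classical
  set s := Finset.univ.filter (fun σ : Equiv.Perm (Fin n) => ∀ i ∈ A, σ i = v i) with hs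
  rcases s.eq_empty_or_nonempty with h | ⟨σ0, hσ0⟩
  · simp [h]
  have hσ0' : ∀ i ∈ A, σ0 i = v i := (Finset.mem_filter.mp hσ0).2
  set B := A.image v with hB
  have hBcard : B.card = A.card := by
    rw [hB]
    apply Finset.card_image_of_injOn
    intro i hi j hj hij
    apply σ0.injective
    rw [hσ0' i hi, hσ0' j hj, hij]
  have hmem : ∀ (σ : ↥s) (x : {x : Fin n // x ∈ Aᶜ}), σ.1 x.1 ∈ Bᶜ := by
    rintro ⟨σ, hσ⟩ ⟨x, hx⟩
    have hσ' : ∀ i ∈ A, σ i = v i := (Finset.mem_filter.mp hσ).2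
    rw [Finset.mem_compl]
    intro hxB
    rw [hB, Finset.mem_image] at hxB
    obtain ⟨i, hi, hvi⟩ := hxB
    have h1 : σ i = σ x := by rw [hσ' i hi]; exact hvi
    have h2 := σ.injective h1
    rw [Finset.mem_compl] at hx
    exact hx (h2 ▸ hi)
  have key : Fintype.card ↥s ≤ Fintype.card ({x : Fin n // x ∈ Aᶜ} ↪ {y : Fin n // y ∈ Bᶜ}) := by
    apply Fintype.card_le_of_injective
      (fun σ => ⟨fun x => ⟨σ.1 x.1, hmem σ x⟩, by
        intro a b hab
        exact Subtype.ext (σ.1.injective (congrArg Subtype.val hab))⟩)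
    intro σ τ hστ
    have hσ' : ∀ i ∈ A, σ.1 i = v i := (Finset.mem_filter.mp σ.2).2
    have hτ' : ∀ i ∈ A, τ.1 i = v i := (Finset.mem_filter.mp τ.2).2
    apply Subtype.ext
    apply Equiv.coe_fn_injective
    funext x
    by_cases hx : x ∈ A
    · show σ.1 x = τ.1 x
      rw [hσ' x hx, hτ' x hx]
    · have hx' : x ∈ Aᶜ := Finset.mem_compl.mpr hx
      have h3 := congrFun (congrArg (fun e : _ ↪ _ => (e : _ → _)) hστ) ⟨x, hx'⟩
      exact congrArg Subtype.val h3
  have hcards : s.card = Fintype.card ↥s := (Fintype.card_coe s).symm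
  rw [hcards]
  refine key.trans (le_of_eq ?_)
  rw [Fintype.card_embedding_eq, Fintype.card_coe, Fintype.card_coe,
    Finset.card_compl, Finset.card_compl, hBcard, Fintype.card_fin,
    Nat.descFactorial_self]

lemma card_perm_mem_on_le (n : ℕ) (A : Finset (Fin n)) (F : Fin n → Finset (Fin n)) :
    (Finset.univ.filter (fun σ : Equiv.Perm (Fin n) => ∀ i ∈ A, σ i ∈ F i)).card
      ≤ (∏ i ∈ A, (F i).card) * (n - A.card).factorial := by
  classical
  have h := Finset.card_le_mul_card_image_of_maps_to
    (f := fun (σ : Equiv.Perm (Fin n)) => (fun i : {x // x ∈ A} => σ i.1))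
    (s := Finset.univ.filter (fun σ : Equiv.Perm (Fin n) => ∀ i ∈ A, σ i ∈ F i))
    (t := Fintype.piFinset (fun i : {x // x ∈ A} => F i.1))
    (by
      intro σ hσ
      rw [Fintype.mem_piFinset]
      intro i
      exact (Finset.mem_filter.mp hσ).2 i.1 i.2)
    ((n - A.card).factorial)
    (by
      intro g hg
      have hsub : (Finset.univ.filter (fun σ : Equiv.Perm (Fin n) => ∀ i ∈ A, σ i ∈ F i)).filter
          (fun σ => (fun i : {x // x ∈ A} => σ i.1) = g)
          ⊆ Finset.univ.filter (fun σ : Equiv.Perm (Fin n) =>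
              ∀ i ∈ A, σ i = (fun j : Fin n => if h : j ∈ A then g ⟨j, h⟩ else j) i) := by
        intro σ hσ
        rw [Finset.mem_filter] at hσ ⊢
        refine ⟨Finset.mem_univ _, ?_⟩
        intro i hi
        simp only [dif_pos hi]
        exact congrFun hσ.2 ⟨i, hi⟩
      calc _ ≤ _ := Finset.card_le_card hsub
        _ ≤ _ := card_perm_eq_on_le n A _)
  refine h.trans ?_
  rw [Fintype.card_piFinset]
  rw [mul_comm]
  apply Nat.mul_le_mul_right
  apply le_of_eq
  rw [← Finset.prod_coe_sort A (fun i => (F i).card)]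

lemma mem_permGraph {n : ℕ} {σ : Equiv.Perm (Fin n)} {p : Fin n × Fin n} :
    p ∈ permGraph n σ ↔ p.2 = σ p.1 := by
  simp only [permGraph, Finset.mem_image, Finset.mem_univ, true_and]
  constructor
  · rintro ⟨i, rfl⟩; rfl
  · intro h; exact ⟨p.1, by rw [← h]⟩

lemma card_perm_inter_eq_le (n ℓ m : ℕ) (S : Finset (Fin n × Fin n))
    (hS : ∀ i : Fin n, (S.filter (fun p => p.1 = i)).card ≤ m) :
    (Finset.univ.filter (fun σ : Equiv.Perm (Fin n) => (permGraph n σ ∩ S).card = ℓ)).card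
      ≤ n.choose ℓ * (m ^ ℓ * (n - ℓ).factorial) := by
  classical
  have h := Finset.card_le_mul_card_image_of_maps_to
    (f := fun (σ : Equiv.Perm (Fin n)) => (permGraph n σ ∩ S).image Prod.fst)
    (s := Finset.univ.filter (fun σ : Equiv.Perm (Fin n) => (permGraph n σ ∩ S).card = ℓ))
    (t := Finset.univ.powersetCard ℓ)
    (by
      intro σ hσ
      rw [Finset.mem_powersetCard]
      refine ⟨Finset.subset_univ _, ?_⟩
      rw [Finset.card_image_of_injOn, (Finset.mem_filter.mp hσ).2]
      intro p hp q hq hpq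
      have hp' := mem_permGraph.mp (Finset.mem_inter.mp hp).1
      have hq' := mem_permGraph.mp (Finset.mem_inter.mp hq).1
      exact Prod.ext hpq (by rw [hp', hq', hpq]))
    (m ^ ℓ * (n - ℓ).factorial)
    (by
      intro A hA
      rw [Finset.mem_powersetCard] at hA
      have hsub : (Finset.univ.filter
            (fun σ : Equiv.Perm (Fin n) => (permGraph n σ ∩ S).card = ℓ)).filter
            (fun σ => (permGraph n σ ∩ S).image Prod.fst = A)
          ⊆ Finset.univ.filter (fun σ : Equiv.Perm (Fin n) =>
              ∀ i ∈ A, σ i ∈ (S.filter (fun p => p.1 = i)).image Prod.snd) := by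
        intro σ hσ
        rw [Finset.mem_filter] at hσ ⊢
        refine ⟨Finset.mem_univ _, ?_⟩
        intro i hi
        rw [← hσ.2, Finset.mem_image] at hi
        obtain ⟨p, hp, hp1⟩ := hi
        obtain ⟨hpg, hpS⟩ := Finset.mem_inter.mp hp
        have hp2 := mem_permGraph.mp hpg
        rw [Finset.mem_image]
        exact ⟨p, Finset.mem_filter.mpr ⟨hpS, hp1⟩, by rw [hp2, hp1]⟩
      calc _ ≤ _ := Finset.card_le_card hsub
        _ ≤ _ := card_perm_mem_on_le n A _
        _ ≤ m ^ ℓ * (n - ℓ).factorial := by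
            rw [hA.2]
            apply Nat.mul_le_mul_right
            calc ∏ i ∈ A, ((S.filter (fun p => p.1 = i)).image Prod.snd).card
                ≤ ∏ i ∈ A, m := Finset.prod_le_prod' (fun i _ =>
                  (Finset.card_image_le).trans (hS i))
              _ = m ^ ℓ := by rw [Finset.prod_const, hA.2])
  refine h.trans ?_
  rw [Finset.card_powersetCard, Finset.card_univ, Fintype.card_fin, mul_comm]

lemma main_nat (n : ℕ) (hn : 1 ≤ n) (k : ℕ) (ℓ : ℕ → ℕ) :
    (Finset.univ.filter (fun σ : Fin k → Equiv.Perm (Fin n) =>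
        ∀ t : Fin k, 1 ≤ t.val →
          (permGraph n (σ t) ∩
            (Finset.univ.filter (fun j : Fin k => j < t)).biUnion
              (fun j => permGraph n (σ j))).card = ℓ (t.val + 1))).card
      ≤ n.factorial * ∏ t ∈ Finset.Icc 2 k,
          (n.choose (ℓ t) * ((t - 1) ^ (ℓ t) * (n - ℓ t).factorial)) := by
  classical
  induction k with
  | zero =>
      calc _ ≤ (Finset.univ : Finset (Fin 0 → Equiv.Perm (Fin n))).card :=
              Finset.card_filter_le _ _
        _ = 1 := by simp
        _ ≤ _ := by
            have he : Finset.Icc 2 0 = ∅ := Finset.Icc_eq_empty (by omega)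
            rw [he]
            simpa using Nat.one_le_iff_ne_zero.mpr (Nat.factorial_ne_zero n)
  | succ k ih =>
      rcases Nat.eq_zero_or_pos k with rfl | hk1
      · calc _ ≤ (Finset.univ : Finset (Fin 1 → Equiv.Perm (Fin n))).card :=
                Finset.card_filter_le _ _
          _ = n.factorial := by
              rw [Finset.card_univ]
              simp [Fintype.card_perm]
          _ ≤ _ := by
              have he : Finset.Icc 2 1 = ∅ := Finset.Icc_eq_empty (by norm_num)
              rw [he]
              simp
      · set B := n.choose (ℓ (k+1)) * (k ^ (ℓ (k+1)) * (n - ℓ (k+1)).factorial) with hB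
        set sk := Finset.univ.filter (fun σ : Fin k → Equiv.Perm (Fin n) =>
          ∀ t : Fin k, 1 ≤ t.val →
            (permGraph n (σ t) ∩
              (Finset.univ.filter (fun j : Fin k => j < t)).biUnion
                (fun j => permGraph n (σ j))).card = ℓ (t.val + 1)) with hsk
        set s := Finset.univ.filter (fun σ : Fin (k+1) → Equiv.Perm (Fin n) =>
          ∀ t : Fin (k+1), 1 ≤ t.val →
            (permGraph n (σ t) ∩
              (Finset.univ.filter (fun j : Fin (k+1) => j < t)).biUnion
                (fun j => permGraph n (σ j))).card = ℓ (t.val + 1)) with hs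
        have hstep : s.card ≤ B * sk.card := by
          apply Finset.card_le_mul_card_image_of_maps_to
            (f := fun (σ : Fin (k+1) → Equiv.Perm (Fin n)) => fun j : Fin k => σ j.castSucc)
          · -- maps to
            intro σ hσ
            rw [hs, Finset.mem_filter] at hσ
            rw [hsk, Finset.mem_filter]
            refine ⟨Finset.mem_univ _, ?_⟩
            intro t ht
            have hcond := hσ.2 t.castSucc (by simpa using ht)
            have hbU : (Finset.univ.filter (fun j : Fin k => j < t)).biUnion
                  (fun j => permGraph n (σ j.castSucc))
                = (Finset.univ.filter (fun j : Fin (k+1) => j < t.castSucc)).biUnion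
                  (fun j => permGraph n (σ j)) := by
              ext p
              simp only [Finset.mem_biUnion, Finset.mem_filter, Finset.mem_univ, true_and]
              constructor
              · rintro ⟨j, hj, hp⟩
                exact ⟨j.castSucc, Fin.castSucc_lt_castSucc_iff.mpr hj, hp⟩
              · rintro ⟨j, hj, hp⟩
                have hjt : j.val < t.val := by simpa [Fin.lt_def] using hj
                have hjk : j.val < k := lt_trans hjt t.isLt
                refine ⟨⟨j.val, hjk⟩, by simpa [Fin.lt_def] using hjt, ?_⟩
                have hje : (⟨j.val, hjk⟩ : Fin k).castSucc = j := by
                  apply Fin.ext; simp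
                rw [hje]; exact hp
            rw [hbU]
            exact hcond
          · -- fiber bound
            intro τ hτ
            set Sτ := (Finset.univ : Finset (Fin k)).biUnion
              (fun j => permGraph n (τ j)) with hSτdef
            have hSτ : ∀ i : Fin n, (Sτ.filter (fun p => p.1 = i)).card ≤ k := by
              intro i
              have hsub : Sτ.filter (fun p => p.1 = i)
                  ⊆ (Finset.univ : Finset (Fin k)).image (fun j => ((i, τ j i) : Fin n × Fin n)) := by
                intro p hp
                rw [Finset.mem_filter, hSτdef, Finset.mem_biUnion] at hp
                obtain ⟨⟨j, _, hpj⟩, hp1⟩ := hp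
                rw [Finset.mem_image]
                refine ⟨j, Finset.mem_univ _, ?_⟩
                have h2 := mem_permGraph.mp hpj
                rw [← hp1, ← h2]
              calc _ ≤ _ := Finset.card_le_card hsub
                _ ≤ (Finset.univ : Finset (Fin k)).card := Finset.card_image_le
                _ = k := by simp
            have hinj : (s.filter (fun σ =>
                  (fun j : Fin k => σ j.castSucc) = τ)).card
                ≤ (Finset.univ.filter (fun π : Equiv.Perm (Fin n) =>
                    (permGraph n π ∩ Sτ).card = ℓ (k+1))).card := by
              apply Finset.card_le_card_of_injOn (fun σ => σ (Fin.last k))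
              · intro σ hσ
                rw [Finset.mem_coe, Finset.mem_filter] at hσ
                obtain ⟨hσs, hfσ⟩ := hσ
                rw [hs, Finset.mem_filter] at hσs
                have hcond := hσs.2 (Fin.last k) (by simp [Fin.last]; omega)
                rw [Finset.mem_coe, Finset.mem_filter]
                refine ⟨Finset.mem_univ _, ?_⟩
                have hU : (Finset.univ.filter (fun j : Fin (k+1) => j < Fin.last k)).biUnion
                    (fun j => permGraph n (σ j)) = Sτ := by
                  ext p
                  rw [hSτdef]
                  simp only [Finset.mem_biUnion, Finset.mem_filter, Finset.mem_univ, true_and]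
                  constructor
                  · rintro ⟨j, hj, hp⟩
                    have hjk : j.val < k := by simpa [Fin.lt_def] using hj
                    refine ⟨⟨j.val, hjk⟩, ?_⟩
                    have hje : (⟨j.val, hjk⟩ : Fin k).castSucc = j := by
                      apply Fin.ext; simp
                    rw [← congrFun hfσ ⟨j.val, hjk⟩, hje]
                    exact hp
                  · rintro ⟨j, hp⟩
                    refine ⟨j.castSucc, Fin.castSucc_lt_last j, ?_⟩
                    rw [congrFun hfσ j]
                    exact hp
                rw [hU] at hcond
                have : (Fin.last k).val + 1 = k + 1 := by simp
                rw [this] at hcond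
                exact hcond
              · intro σ hσ σ' hσ' heq
                rw [Finset.mem_coe, Finset.mem_filter] at hσ hσ'
                funext i
                refine Fin.lastCases ?_ ?_ i
                · exact heq
                · intro j
                  rw [congrFun hσ.2 j, congrFun hσ'.2 j]
            refine hinj.trans ?_
            exact card_perm_inter_eq_le n (ℓ (k+1)) k Sτ hSτ
        calc s.card ≤ B * sk.card := hstep
          _ ≤ B * (n.factorial * ∏ t ∈ Finset.Icc 2 k,
              (n.choose (ℓ t) * ((t - 1) ^ (ℓ t) * (n - ℓ t).factorial))) :=
            Nat.mul_le_mul_left B ih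
          _ = n.factorial * ((∏ t ∈ Finset.Icc 2 k,
              (n.choose (ℓ t) * ((t - 1) ^ (ℓ t) * (n - ℓ t).factorial))) *
              (n.choose (ℓ (k+1)) * (((k+1) - 1) ^ (ℓ (k+1)) * (n - ℓ (k+1)).factorial))) := by
            simp only [Nat.add_sub_cancel]
            rw [hB]; ring
          _ = _ := by
            rw [Finset.prod_Icc_succ_top (by omega : 2 ≤ k + 1)]

/-- For `n ≥ 1`, `k ≥ 2` and nonnegative integers `ℓ_2, …, ℓ_k`, the number `N_L` of
ordered `k`-tuples `(σ_1, …, σ_k)` of permutations of `[n]` such that for every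
`2 ≤ t ≤ k` the graph of `σ_t` meets the union of the graphs of `σ_1, …, σ_{t-1}` in
exactly `ℓ_t` edges satisfies `N_L ≤ (n!)^k Π_{t=2}^k (t-1)^{ℓ_t} / ℓ_t!`.
(Here `σ_t` for `t ∈ {1, …, k}` is represented by `σ ⟨t-1⟩` for `t-1 : Fin k`.) -/
theorem tuple_count_with_intersections_le (n k : ℕ) (hn : 1 ≤ n) (hk : 2 ≤ k)
    (ℓ : ℕ → ℕ) :
    ((Finset.univ.filter (fun σ : Fin k → Equiv.Perm (Fin n) =>
        ∀ t : Fin k, 1 ≤ t.val →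
          (permGraph n (σ t) ∩
            (Finset.univ.filter (fun j : Fin k => j < t)).biUnion
              (fun j => permGraph n (σ j))).card = ℓ (t.val + 1))).card : ℝ)
      ≤ (Nat.factorial n : ℝ) ^ k *
          ∏ t ∈ Finset.Icc 2 k, ((t : ℝ) - 1) ^ (ℓ t) / (Nat.factorial (ℓ t) : ℝ) := by
  have hnat := main_nat n hn k ℓ
  refine le_trans (Nat.cast_le.mpr hnat) ?_
  have step : ∀ t ∈ Finset.Icc 2 k,
      ((n.choose (ℓ t) * ((t - 1) ^ (ℓ t) * (n - ℓ t).factorial) : ℕ) : ℝ)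
        ≤ (n.factorial : ℝ) * (((t : ℝ) - 1) ^ (ℓ t) / ((ℓ t).factorial : ℝ)) := by
    intro t ht
    obtain ⟨ht2, -⟩ := Finset.mem_Icc.mp ht
    have h1t : 1 ≤ t := le_trans one_le_two ht2
    have hkey : (n.choose (ℓ t) * (n - ℓ t).factorial * (ℓ t).factorial : ℕ) ≤ n.factorial := by
      rcases le_or_gt (ℓ t) n with h | h
      · apply le_of_eq
        calc n.choose (ℓ t) * (n - ℓ t).factorial * (ℓ t).factorial
            = n.choose (ℓ t) * (ℓ t).factorial * (n - ℓ t).factorial := by ring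
          _ = n.factorial := Nat.choose_mul_factorial_mul_factorial h
      · rw [Nat.choose_eq_zero_of_lt h]
        simp
    have hkeyR : ((n.choose (ℓ t) : ℝ) * ((n - ℓ t).factorial : ℝ)) * ((ℓ t).factorial : ℝ)
        ≤ (n.factorial : ℝ) := by exact_mod_cast hkey
    have hL : (0:ℝ) < ((ℓ t).factorial : ℝ) := by
      exact_mod_cast (ℓ t).factorial_pos
    have hx : (0:ℝ) ≤ ((t : ℝ) - 1) ^ (ℓ t) := by
      apply pow_nonneg
      have : (2:ℝ) ≤ (t:ℝ) := by exact_mod_cast ht2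
      linarith
    rw [Nat.cast_mul, Nat.cast_mul, Nat.cast_pow, Nat.cast_sub h1t, Nat.cast_one]
    rw [mul_div_assoc' (n.factorial : ℝ), le_div_iff₀ hL]
    nlinarith [mul_le_mul_of_nonneg_left hkeyR hx]
  calc ((n.factorial * ∏ t ∈ Finset.Icc 2 k,
        (n.choose (ℓ t) * ((t - 1) ^ (ℓ t) * (n - ℓ t).factorial)) : ℕ) : ℝ)
      = (n.factorial : ℝ) * ∏ t ∈ Finset.Icc 2 k,
        ((n.choose (ℓ t) * ((t - 1) ^ (ℓ t) * (n - ℓ t).factorial) : ℕ) : ℝ) := by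
        rw [Nat.cast_mul, Nat.cast_prod]
    _ ≤ (n.factorial : ℝ) * ∏ t ∈ Finset.Icc 2 k,
        ((n.factorial : ℝ) * (((t : ℝ) - 1) ^ (ℓ t) / ((ℓ t).factorial : ℝ))) := by
        apply mul_le_mul_of_nonneg_left _ (Nat.cast_nonneg _)
        exact Finset.prod_le_prod (fun t _ => Nat.cast_nonneg _) step
    _ = (Nat.factorial n : ℝ) ^ k *
          ∏ t ∈ Finset.Icc 2 k, ((t : ℝ) - 1) ^ (ℓ t) / (Nat.factorial (ℓ t) : ℝ) := by
        rw [Finset.prod_mul_distrib, Finset.prod_const, Nat.card_Icc]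
        have h1 : k + 1 - 2 = k - 1 := Nat.succ_sub_succ k 1
        have h2 : k - 1 + 1 = k := Nat.sub_add_cancel (le_trans one_le_two hk)
        rw [h1, ← mul_assoc, ← pow_succ', h2]
end

section
/- Let n ≥ 1, k ≥ 2 and 0 ≤ a ≤ (k−1)n be natural numbers, and let M(a) be the number of ordered k-tuples (σ_1,…,σ_k) of permutations of [n] such that |∪_{t=1}^k graph(σ_t)| = kn − a. Then M(a) ≤ (n!)^k · (k(k−1)/2)^a / a!. -/
open Finset


/-- `M(a)`: the number of ordered `k`-tuples of permutations of `[n]` the union of whose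
graphs has exactly `k·n - a` elements. -/
def Mcount (n k a : ℕ) : ℕ :=
  (Finset.univ.filter (fun σ : Fin k → Equiv.Perm (Fin n) =>
    (Finset.univ.biUnion
      (fun t : Fin k => Finset.univ.image (fun i : Fin n => (i, σ t i)))).card = k * n - a)).card

section Aux

variable {n k a : ℕ}

/-- `(t,i)` is a "duplicate": some earlier permutation agrees at `i`. -/
def Dup (σ : Fin k → Equiv.Perm (Fin n)) (t : Fin k) (i : Fin n) : Prop :=
  ∃ s, s < t ∧ σ s i = σ t i

instance (σ : Fin k → Equiv.Perm (Fin n)) (t : Fin k) (i : Fin n) : Decidable (Dup σ t i) := by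
  unfold Dup; exact Fintype.decidableExistsFintype

def Dset (σ : Fin k → Equiv.Perm (Fin n)) : Finset (Fin k × Fin n) :=
  univ.filter fun p => Dup σ p.1 p.2

def Uset (σ : Fin k → Equiv.Perm (Fin n)) : Finset (Fin n × Fin n) :=
  univ.biUnion (fun t : Fin k => univ.image (fun i : Fin n => (i, σ t i)))

/-- enumeration of `Dset σ` twisted by `π`. -/
noncomputable def cmap (hn : 0 < n) (hk : 2 ≤ k) (σ : Fin k → Equiv.Perm (Fin n)) (π : Equiv.Perm (Fin a))
    (j : Fin a) : Fin k × Fin n :=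
  if h : ((π j : ℕ)) < (Dset σ).toList.length then (Dset σ).toList[(π j : ℕ)]
  else (⟨0, by omega⟩, ⟨0, hn⟩)

def srcSet (σ : Fin k → Equiv.Perm (Fin n)) (t : Fin k) (i : Fin n) : Finset (Fin k) :=
  univ.filter fun s => s < t ∧ σ s i = σ t i

noncomputable def gmap (hn : 0 < n) (hk : 2 ≤ k) (σ : Fin k → Equiv.Perm (Fin n)) (π : Equiv.Perm (Fin a))
    (j : Fin a) : Σ t : Fin k, Fin (t : ℕ) :=
  let p := cmap hn hk σ π j
  if h : (srcSet σ p.1 p.2).Nonempty then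
    ⟨p.1, ⟨((srcSet σ p.1 p.2).min' h : Fin k), by
      have := Finset.min'_mem _ h
      simp only [srcSet, Finset.mem_filter] at this
      exact this.2.1⟩⟩
  else ⟨⟨1, by omega⟩, ⟨0, by norm_num⟩⟩

noncomputable def Jt (hn : 0 < n) (hk : 2 ≤ k) (σ : Fin k → Equiv.Perm (Fin n)) (π : Equiv.Perm (Fin a))
    (t : Fin k) : Finset (Fin a) :=
  univ.filter fun j => (cmap hn hk σ π j).1 = t

def Sset (σ : Fin k → Equiv.Perm (Fin n)) (t : Fin k) : Finset (Fin n) :=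
  univ.filter fun i => Dup σ t i

def Wset (σ : Fin k → Equiv.Perm (Fin n)) (t : Fin k) : Finset (Fin n) :=
  ((Sset σ t).image (fun i => σ t i))ᶜ

noncomputable def fperm (hn : 0 < n) (hk : 2 ≤ k) (σ : Fin k → Equiv.Perm (Fin n)) (π : Equiv.Perm (Fin a))
    (t : Fin k) (r : Fin n) : Fin n :=
  if h1 : (r : ℕ) < (Jt hn hk σ π t).toList.length then
    (cmap hn hk σ π ((Jt hn hk σ π t).toList[(r : ℕ)])).2
  else if h2 : (r : ℕ) - (Jt hn hk σ π t).toList.length < (Wset σ t).toList.length then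
    (σ t).symm ((Wset σ t).toList[(r : ℕ) - (Jt hn hk σ π t).toList.length])
  else r

noncomputable def rho (hn : 0 < n) (hk : 2 ≤ k) (σ : Fin k → Equiv.Perm (Fin n))
    (π : Equiv.Perm (Fin a)) (t : Fin k) : Equiv.Perm (Fin n) :=
  if h : Function.Bijective (fperm hn hk σ π t) then Equiv.ofBijective _ h else 1

end Aux
section Lemmas

variable {n k a : ℕ} (hn : 0 < n) (hk : 2 ≤ k) {σ : Fin k → Equiv.Perm (Fin n)}
  {π : Equiv.Perm (Fin a)} (hD : (Dset σ).card = a)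

include hD

lemma toList_len : (Dset σ).toList.length = a := by rw [Finset.length_toList, hD]

lemma cmap_eq (j : Fin a) :
    cmap hn hk σ π j = (Dset σ).toList[(π j : ℕ)]'(by rw [toList_len hD]; exact (π j).2) := by
  rw [cmap, dif_pos]

lemma cmap_mem (j : Fin a) : cmap hn hk σ π j ∈ Dset σ := by
  rw [cmap_eq hn hk hD, ← Finset.mem_toList]
  exact List.getElem_mem _

lemma cmap_inj : Function.Injective (cmap hn hk σ π) := by
  intro j j' h
  rw [cmap_eq hn hk hD, cmap_eq hn hk hD] at h
  rw [(Finset.nodup_toList _).getElem_inj_iff] at h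
  exact π.injective (Fin.ext h)

lemma cmap_surj (p : Fin k × Fin n) (hp : p ∈ Dset σ) : ∃ j, cmap hn hk σ π j = p := by
  rw [← Finset.mem_toList, List.mem_iff_getElem] at hp
  obtain ⟨m, hm, hmp⟩ := hp
  refine ⟨π.symm ⟨m, by rwa [toList_len hD] at hm⟩, ?_⟩
  rw [cmap_eq hn hk hD]
  simpa using hmp

lemma cmap_dup (j : Fin a) :
    Dup σ (cmap hn hk σ π j).1 (cmap hn hk σ π j).2 := by
  have := cmap_mem hn hk hD (π := π) j
  rw [Dset, Finset.mem_filter] at this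
  exact this.2

lemma srcSet_nonempty (j : Fin a) :
    (srcSet σ (cmap hn hk σ π j).1 (cmap hn hk σ π j).2).Nonempty := by
  obtain ⟨s, hs1, hs2⟩ := cmap_dup hn hk hD (π := π) j
  exact ⟨s, by simp [srcSet, hs1, hs2]⟩

lemma gmap_fst (j : Fin a) : (gmap hn hk σ π j).1 = (cmap hn hk σ π j).1 := by
  rw [gmap, dif_pos (srcSet_nonempty hn hk hD j)]

lemma gmap_src (j : Fin a) :
    ∃ s : Fin k, (s : ℕ) = ((gmap hn hk σ π j).2 : ℕ) ∧ s < (cmap hn hk σ π j).1 ∧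
      σ s (cmap hn hk σ π j).2 = σ (cmap hn hk σ π j).1 (cmap hn hk σ π j).2 := by
  have hne := srcSet_nonempty hn hk hD (π := π) j
  refine ⟨(srcSet σ (cmap hn hk σ π j).1 (cmap hn hk σ π j).2).min' hne, ?_, ?_, ?_⟩
  · rw [gmap, dif_pos hne]
  · have := Finset.min'_mem _ hne
    simp only [srcSet, Finset.mem_filter] at this
    exact this.2.1
  · have := Finset.min'_mem _ hne
    simp only [srcSet, Finset.mem_filter] at this
    exact this.2.2

lemma Jt_image (t : Fin k) :
    (Jt hn hk σ π t).image (fun j => (cmap hn hk σ π j).2) = Sset σ t := by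
  ext i
  simp only [Finset.mem_image, Jt, Sset, Finset.mem_filter, Finset.mem_univ, true_and]
  constructor
  · rintro ⟨j, hj, rfl⟩
    have := cmap_dup hn hk hD (π := π) j
    rwa [hj] at this
  · intro hi
    obtain ⟨j, hj⟩ := cmap_surj hn hk hD (π := π) (t, i) (by simp [Dset, hi])
    exact ⟨j, by rw [hj], by rw [hj]⟩

lemma Jt_card (t : Fin k) : (Jt hn hk σ π t).card = (Sset σ t).card := by
  rw [← Jt_image hn hk hD]
  rw [Finset.card_image_of_injOn]
  intro j hj j' hj' h
  rw [Finset.mem_coe, Jt, Finset.mem_filter] at hj hj'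
  exact cmap_inj hn hk hD (Prod.ext (hj.2.trans hj'.2.symm) h)

omit hD in
lemma Sset_card_le (t : Fin k) : (Sset σ t).card ≤ n := by
  simpa [Sset] using Finset.card_filter_le (Finset.univ : Finset (Fin n)) _

omit hD in
lemma Wset_card (t : Fin k) : (Wset σ t).card = n - (Sset σ t).card := by
  rw [Wset, Finset.card_compl]
  congr 1
  · simp
  · rw [Finset.card_image_of_injective _ (σ t).injective]

end Lemmas
section Lemmas2

variable {n k a : ℕ} (hn : 0 < n) (hk : 2 ≤ k) {σ : Fin k → Equiv.Perm (Fin n)}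
  {π : Equiv.Perm (Fin a)} (hD : (Dset σ).card = a)

lemma Wt_len (σ : Fin k → Equiv.Perm (Fin n)) (t : Fin k) :
    (Wset σ t).toList.length = n - (Sset σ t).card := by
  rw [Finset.length_toList, Wset_card]

include hD

lemma Jt_len (t : Fin k) : (Jt hn hk σ π t).toList.length = (Sset σ t).card := by
  rw [Finset.length_toList, Jt_card hn hk hD]

omit hD in
lemma fperm_lt (t : Fin k) (r : Fin n) (h : (r : ℕ) < (Jt hn hk σ π t).toList.length) :
    fperm hn hk σ π t r = (cmap hn hk σ π ((Jt hn hk σ π t).toList[(r : ℕ)])).2 := by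
  rw [fperm, dif_pos h]

omit hD in
lemma Jt_toList_mem (t : Fin k) (m : ℕ) (h : m < (Jt hn hk σ π t).toList.length) :
    (Jt hn hk σ π t).toList[m] ∈ Jt hn hk σ π t := by
  rw [← Finset.mem_toList]; exact List.getElem_mem _

lemma fperm_lt_mem (t : Fin k) (r : Fin n) (h : (r : ℕ) < (Jt hn hk σ π t).toList.length) :
    fperm hn hk σ π t r ∈ Sset σ t := by
  rw [fperm_lt hn hk t r h]
  have hmem := Jt_toList_mem hn hk (π := π) t r h
  have hmem2 : (cmap hn hk σ π ((Jt hn hk σ π t).toList[(r : ℕ)])).1 = t :=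
    (Finset.mem_filter.mp hmem).2
  have := cmap_dup hn hk hD (π := π) ((Jt hn hk σ π t).toList[(r : ℕ)])
  rw [hmem2] at this
  simpa [Sset] using this

lemma fperm_ge_bound (t : Fin k) (r : Fin n) (h : ¬ (r : ℕ) < (Jt hn hk σ π t).toList.length) :
    (r : ℕ) - (Jt hn hk σ π t).toList.length < (Wset σ t).toList.length := by
  have e1 := Jt_len hn hk hD (π := π) t
  have e2 := Wt_len σ t
  have e3 := Sset_card_le (σ := σ) t
  have := r.2
  omega

lemma fperm_ge (t : Fin k) (r : Fin n) (h : ¬ (r : ℕ) < (Jt hn hk σ π t).toList.length) :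
    fperm hn hk σ π t r =
      (σ t).symm ((Wset σ t).toList[(r : ℕ) - (Jt hn hk σ π t).toList.length]'
        (fperm_ge_bound hn hk hD t r h)) := by
  rw [fperm, dif_neg h, dif_pos (fperm_ge_bound hn hk hD t r h)]

lemma fperm_ge_not_mem (t : Fin k) (r : Fin n) (h : ¬ (r : ℕ) < (Jt hn hk σ π t).toList.length) :
    fperm hn hk σ π t r ∉ Sset σ t := by
  intro hmem
  have hw : σ t (fperm hn hk σ π t r) ∈ Wset σ t := by
    rw [fperm_ge hn hk hD t r h, Equiv.apply_symm_apply, ← Finset.mem_toList]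
    exact List.getElem_mem _
  rw [Wset] at hw
  exact (Finset.mem_compl.mp hw) (Finset.mem_image_of_mem _ hmem)

lemma fperm_bij (t : Fin k) : Function.Bijective (fperm hn hk σ π t) := by
  rw [← Finite.injective_iff_bijective]
  intro r r' hrr
  by_cases h1 : (r : ℕ) < (Jt hn hk σ π t).toList.length <;>
    by_cases h2 : (r' : ℕ) < (Jt hn hk σ π t).toList.length
  · rw [fperm_lt hn hk t r h1, fperm_lt hn hk t r' h2] at hrr
    have m1 := Jt_toList_mem hn hk (π := π) t r h1
    have m2 := Jt_toList_mem hn hk (π := π) t r' h2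
    have m1' := (Finset.mem_filter.mp m1).2
    have m2' := (Finset.mem_filter.mp m2).2
    have : (Jt hn hk σ π t).toList[(r : ℕ)] = (Jt hn hk σ π t).toList[(r' : ℕ)] :=
      cmap_inj hn hk hD (Prod.ext (m1'.trans m2'.symm) hrr)
    rw [(Finset.nodup_toList _).getElem_inj_iff] at this
    exact Fin.ext this
  · exact absurd (hrr ▸ fperm_lt_mem hn hk hD t r h1) (fperm_ge_not_mem hn hk hD t r' h2)
  · exact absurd (hrr ▸ fperm_ge_not_mem hn hk hD t r h1) (by simp [fperm_lt_mem hn hk hD t r' h2])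
  · rw [fperm_ge hn hk hD t r h1, fperm_ge hn hk hD t r' h2] at hrr
    have := (σ t).symm.injective hrr
    rw [(Finset.nodup_toList _).getElem_inj_iff] at this
    exact Fin.ext (by omega)

lemma rho_coe (t : Fin k) : ⇑(rho hn hk σ π t) = fperm hn hk σ π t := by
  rw [rho, dif_pos (fperm_bij hn hk hD t)]
  rfl

end Lemmas2
section Main

variable {n k a : ℕ} (hn : 0 < n) (hk : 2 ≤ k) {σ σ' : Fin k → Equiv.Perm (Fin n)}
  {π π' : Equiv.Perm (Fin a)}

lemma Jt_congr (hD : (Dset σ).card = a) (hD' : (Dset σ').card = a)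
    (hg : gmap hn hk σ π = gmap hn hk σ' π') (t : Fin k) :
    Jt hn hk σ π t = Jt hn hk σ' π' t := by
  unfold Jt
  ext j
  simp only [Finset.mem_filter, Finset.mem_univ, true_and]
  rw [← gmap_fst hn hk hD, ← gmap_fst hn hk hD', hg]

lemma fperm_congr (hD : (Dset σ).card = a) (hD' : (Dset σ').card = a)
    (hρ : ∀ t, rho hn hk σ π t = rho hn hk σ' π' t) (t : Fin k) :
    fperm hn hk σ π t = fperm hn hk σ' π' t := by
  rw [← rho_coe hn hk hD, ← rho_coe hn hk hD', hρ t]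

lemma cmap_congr (hD : (Dset σ).card = a) (hD' : (Dset σ').card = a)
    (hg : gmap hn hk σ π = gmap hn hk σ' π')
    (hρ : ∀ t, rho hn hk σ π t = rho hn hk σ' π' t) (j : Fin a) :
    cmap hn hk σ π j = cmap hn hk σ' π' j := by
  have hfst : (cmap hn hk σ π j).1 = (cmap hn hk σ' π' j).1 := by
    rw [← gmap_fst hn hk hD, ← gmap_fst hn hk hD', hg]
  set t := (cmap hn hk σ π j).1 with ht
  have hj : j ∈ Jt hn hk σ π t := by
    rw [Jt, Finset.mem_filter]
    exact ⟨Finset.mem_univ _, rfl⟩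
  obtain ⟨m, hm, hjm⟩ := List.mem_iff_getElem.mp (Finset.mem_toList.mpr hj)
  have hmn : m < n := lt_of_lt_of_le hm (by
    rw [Jt_len hn hk hD]; exact Sset_card_le (σ := σ) t)
  have h1 : fperm hn hk σ π t ⟨m, hmn⟩ = (cmap hn hk σ π j).2 := by
    rw [fperm_lt hn hk t ⟨m, hmn⟩ hm]
    exact congrArg (fun x => (cmap hn hk σ π x).2) hjm
  have hJ := Jt_congr hn hk hD hD' hg t
  have hlist : (Jt hn hk σ' π' t).toList = (Jt hn hk σ π t).toList := by rw [hJ]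
  have hm' : (m : ℕ) < (Jt hn hk σ' π' t).toList.length := by rw [hlist]; exact hm
  have h2 : fperm hn hk σ' π' t ⟨m, hmn⟩ = (cmap hn hk σ' π' j).2 := by
    rw [fperm_lt hn hk t ⟨m, hmn⟩ hm']
    refine congrArg (fun x => (cmap hn hk σ' π' x).2) ?_
    have : (Jt hn hk σ' π' t).toList[m]'hm' = (Jt hn hk σ π t).toList[m]'hm := by
      simp only [hlist]
    exact this.trans hjm
  have hf := fperm_congr hn hk hD hD' hρ t
  refine Prod.ext hfst ?_
  rw [← h1, ← h2, hf]

lemma Sset_congr (hD : (Dset σ).card = a) (hD' : (Dset σ').card = a)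
    (hg : gmap hn hk σ π = gmap hn hk σ' π')
    (hρ : ∀ t, rho hn hk σ π t = rho hn hk σ' π' t) (t : Fin k) :
    Sset σ t = Sset σ' t := by
  have hc : (fun j => (cmap hn hk σ π j).2) = fun j => (cmap hn hk σ' π' j).2 := by
    funext j; rw [cmap_congr hn hk hD hD' hg hρ j]
  rw [← Jt_image hn hk hD (π := π) t, ← Jt_image hn hk hD' (π := π') t,
    Jt_congr hn hk hD hD' hg t, hc]

lemma sigma_congr (hD : (Dset σ).card = a) (hD' : (Dset σ').card = a)
    (hg : gmap hn hk σ π = gmap hn hk σ' π')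
    (hρ : ∀ t, rho hn hk σ π t = rho hn hk σ' π' t) : σ = σ' := by
  suffices H : ∀ N (t : Fin k), (t : ℕ) < N → σ t = σ' t by
    funext t; exact H k t t.2
  intro N
  induction N with
  | zero => exact fun t ht => absurd ht (by omega)
  | succ N ih =>
    intro t ht
    have IH : ∀ s : Fin k, s < t → σ s = σ' s := fun s hs =>
      ih s (by have : (s : ℕ) < (t : ℕ) := hs; omega)
    have hS := Sset_congr hn hk hD hD' hg hρ t
    have h1 : ∀ i ∈ Sset σ t, σ t i = σ' t i := by
      intro i hi
      have hdup : Dup σ t i := by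
        rw [Sset, Finset.mem_filter] at hi; exact hi.2
      obtain ⟨j, hj⟩ := cmap_surj hn hk hD (π := π) (t, i) (by
        rw [Dset, Finset.mem_filter]; exact ⟨Finset.mem_univ _, hdup⟩)
      obtain ⟨s, hs_val, hs_lt, hs_eq⟩ := gmap_src hn hk hD (π := π) j
      obtain ⟨s', hs'_val, hs'_lt, hs'_eq⟩ := gmap_src hn hk hD' (π := π') j
      have hcj := cmap_congr hn hk hD hD' hg hρ j
      have hss' : s = s' := Fin.ext (by rw [hs_val, hs'_val, hg])
      have hj' : cmap hn hk σ' π' j = (t, i) := by rw [← hcj, hj]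
      rw [hj] at hs_eq hs_lt
      rw [hj'] at hs'_eq hs'_lt
      calc σ t i = σ s i := hs_eq.symm
        _ = σ' s i := by rw [IH s hs_lt]
        _ = σ' s' i := by rw [hss']
        _ = σ' t i := hs'_eq
    have hW : Wset σ t = Wset σ' t := by
      rw [Wset, Wset, ← hS]
      congr 1
      apply Finset.image_congr
      intro i hi
      exact h1 i hi
    apply Equiv.ext
    intro i
    by_cases hi : i ∈ Sset σ t
    · exact h1 i hi
    · obtain ⟨r, hr⟩ := (fperm_bij hn hk hD (π := π) t).surjective i
      have hge : ¬ (r : ℕ) < (Jt hn hk σ π t).toList.length := by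
        intro hlt; exact hi (hr ▸ fperm_lt_mem hn hk hD t r hlt)
      have e1 : σ t i = (Wset σ t).toList.getD
          ((r : ℕ) - (Jt hn hk σ π t).toList.length) ⟨0, hn⟩ := by
        rw [List.getD_eq_getElem _ _ (fperm_ge_bound hn hk hD t r hge),
          ← hr, fperm_ge hn hk hD t r hge, Equiv.apply_symm_apply]
      have hf := fperm_congr hn hk hD hD' hρ t
      have hr' : fperm hn hk σ' π' t r = i := by rw [← hf]; exact hr
      have hJ := Jt_congr hn hk hD hD' hg t
      have hge' : ¬ (r : ℕ) < (Jt hn hk σ' π' t).toList.length := by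
        rw [← hJ]; exact hge
      have e2 : σ' t i = (Wset σ' t).toList.getD
          ((r : ℕ) - (Jt hn hk σ' π' t).toList.length) ⟨0, hn⟩ := by
        rw [List.getD_eq_getElem _ _ (fperm_ge_bound hn hk hD' t r hge'),
          ← hr', fperm_ge hn hk hD' t r hge', Equiv.apply_symm_apply]
      rw [e1, e2, hW, hJ]

lemma perm_pi_congr (hD : (Dset σ).card = a) (hD' : (Dset σ').card = a)
    (hg : gmap hn hk σ π = gmap hn hk σ' π')
    (hρ : ∀ t, rho hn hk σ π t = rho hn hk σ' π' t) : π = π' := by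
  have hσ := sigma_congr hn hk hD hD' hg hρ
  subst hσ
  apply Equiv.ext
  intro j
  have hcj := cmap_congr hn hk hD hD' hg hρ j
  rw [cmap_eq hn hk hD (π := π), cmap_eq hn hk hD (π := π')] at hcj
  rw [(Finset.nodup_toList _).getElem_inj_iff] at hcj
  exact Fin.ext hcj

end Main
section Count

variable {n k a : ℕ}

lemma Uset_card (σ : Fin k → Equiv.Perm (Fin n)) :
    (Uset σ).card = ∑ i : Fin n, (Finset.univ.image fun t => σ t i).card := by
  rw [Finset.card_eq_sum_card_fiberwise (f := fun p => p.1) (t := Finset.univ)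
    (fun x _ => Finset.mem_univ _)]
  apply Finset.sum_congr rfl
  intro i _
  have hfib : (Uset σ).filter (fun p => p.1 = i) =
      (Finset.univ.image fun t => σ t i).image (fun v => (i, v)) := by
    ext ⟨x, y⟩
    simp only [Uset, Finset.mem_filter, Finset.mem_biUnion, Finset.mem_image,
      Finset.mem_univ, true_and, Prod.mk.injEq]
    aesop
  rw [hfib, Finset.card_image_of_injective]
  exact fun v w h => by simpa using h

lemma Dset_card_sum (σ : Fin k → Equiv.Perm (Fin n)) :
    (Dset σ).card = ∑ i : Fin n, (Finset.univ.filter fun t => Dup σ t i).card := by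
  rw [Finset.card_eq_sum_card_fiberwise (f := fun p => p.2) (t := Finset.univ)
    (fun x _ => Finset.mem_univ _)]
  apply Finset.sum_congr rfl
  intro i _
  have hfib : (Dset σ).filter (fun p => p.2 = i) =
      (Finset.univ.filter fun t => Dup σ t i).image (fun t => (t, i)) := by
    ext ⟨x, y⟩
    simp only [Dset, Finset.mem_filter, Finset.mem_image, Finset.mem_univ, true_and,
      Prod.mk.injEq]
    constructor
    · rintro ⟨hd, rfl⟩
      exact ⟨x, hd, rfl, rfl⟩
    · rintro ⟨t, ht, rfl, rfl⟩
      exact ⟨ht, rfl⟩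
  rw [hfib, Finset.card_image_of_injective]
  exact fun v w h => by simpa using h

lemma notDup_card (σ : Fin k → Equiv.Perm (Fin n)) (i : Fin n) :
    (Finset.univ.filter fun t => ¬ Dup σ t i).card = (Finset.univ.image fun t => σ t i).card := by
  have him : (Finset.univ.filter fun t => ¬ Dup σ t i).image (fun t => σ t i) =
      Finset.univ.image (fun t => σ t i) := by
    apply Finset.Subset.antisymm (Finset.image_subset_image (Finset.filter_subset _ _))
    intro v hv
    rw [Finset.mem_image] at hv
    obtain ⟨t, _, rfl⟩ := hv
    have hne : (Finset.univ.filter fun s => σ s i = σ t i).Nonempty := ⟨t, by simp⟩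
    set m := (Finset.univ.filter fun s => σ s i = σ t i).min' hne with hm
    have hmm := Finset.min'_mem _ hne
    rw [Finset.mem_filter] at hmm
    rw [Finset.mem_image]
    refine ⟨m, ?_, hmm.2⟩
    rw [Finset.mem_filter]
    refine ⟨Finset.mem_univ _, ?_⟩
    rintro ⟨s, hs1, hs2⟩
    have : m ≤ s := Finset.min'_le _ _ (by simp [hs2.trans hmm.2])
    exact absurd hs1 (not_lt.mpr this)
  rw [← him]
  rw [Finset.card_image_of_injOn]
  intro t ht t' ht' h
  rw [Finset.mem_coe, Finset.mem_filter] at ht ht'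
  rcases lt_trichotomy t t' with hlt | heq | hgt
  · exact absurd ⟨t, hlt, h⟩ ht'.2
  · exact heq
  · exact absurd ⟨t', hgt, h.symm⟩ ht.2

lemma card_Dset_add_card_Uset' (σ : Fin k → Equiv.Perm (Fin n)) :
    (Dset σ).card + (Uset σ).card = k * n := by
  rw [Uset_card σ, Dset_card_sum σ, ← Finset.sum_add_distrib]
  have : ∀ i : Fin n, (Finset.univ.filter fun t => Dup σ t i).card +
      (Finset.univ.image fun t => σ t i).card = k := by
    intro i
    rw [← notDup_card σ i, Finset.card_filter_add_card_filter_not]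
    simp
  rw [Finset.sum_congr rfl (fun i _ => this i)]
  simp [mul_comm]

end Count

section Final

lemma key_card (n k a : ℕ) (hn : 0 < n) (hk : 2 ≤ k) (hak : a ≤ k * n) :
    Mcount n k a * a.factorial ≤
      Fintype.card ((Fin a → Σ t : Fin k, Fin (t : ℕ)) × (Fin k → Equiv.Perm (Fin n))) := by
  classical
  set F := (Finset.univ.filter (fun σ : Fin k → Equiv.Perm (Fin n) =>
    (Finset.univ.biUnion
      (fun t : Fin k => Finset.univ.image (fun i : Fin n => (i, σ t i)))).card = k * n - a)) ×ˢ
    (Finset.univ : Finset (Equiv.Perm (Fin a))) with hFdef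
  have hF : F.card = Mcount n k a * a.factorial := by
    rw [hFdef, Finset.card_product, Mcount, Finset.card_univ, Fintype.card_perm,
      Fintype.card_fin]
  have hinj : ∀ x ∈ F, ∀ y ∈ F,
      (fun x : (Fin k → Equiv.Perm (Fin n)) × Equiv.Perm (Fin a) =>
        (gmap hn hk x.1 x.2, fun t => rho hn hk x.1 x.2 t)) x =
      (fun x : (Fin k → Equiv.Perm (Fin n)) × Equiv.Perm (Fin a) =>
        (gmap hn hk x.1 x.2, fun t => rho hn hk x.1 x.2 t)) y → x = y := by
    intro x hx y hy hxy
    rw [hFdef, Finset.mem_product, Finset.mem_filter] at hx hy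
    have hDx : (Dset x.1).card = a := by
      have h1 := card_Dset_add_card_Uset' x.1
      have h2 : (Uset x.1).card = k * n - a := hx.1.2
      omega
    have hDy : (Dset y.1).card = a := by
      have h1 := card_Dset_add_card_Uset' y.1
      have h2 : (Uset y.1).card = k * n - a := hy.1.2
      omega
    simp only [Prod.mk.injEq] at hxy
    have hg := hxy.1
    have hρ : ∀ t, rho hn hk x.1 x.2 t = rho hn hk y.1 y.2 t := fun t => congrFun hxy.2 t
    exact Prod.ext (sigma_congr hn hk hDx hDy hg hρ) (perm_pi_congr hn hk hDx hDy hg hρ)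
  have := Finset.card_le_card_of_injOn _ (fun x _ => Finset.mem_univ
    ((gmap hn hk x.1 x.2, fun t => rho hn hk x.1 x.2 t))) hinj
  rw [hF, Finset.card_univ] at this
  exact this

theorem Mcount_le' (n k a : ℕ) (hn : 1 ≤ n) (hk : 2 ≤ k) (ha : a ≤ (k - 1) * n) :
    (Mcount n k a : ℝ)
      ≤ (Nat.factorial n : ℝ) ^ k * ((k : ℝ) * ((k : ℝ) - 1) / 2) ^ a
          / (Nat.factorial a : ℝ) := by
  have hak : a ≤ k * n := le_trans ha (Nat.mul_le_mul_right n (Nat.sub_le k 1))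
  have hcard : Fintype.card ((Fin a → Σ t : Fin k, Fin (t : ℕ)) × (Fin k → Equiv.Perm (Fin n)))
      = (k * (k - 1) / 2) ^ a * (Nat.factorial n) ^ k := by
    rw [Fintype.card_prod, Fintype.card_fun, Fintype.card_fun, Fintype.card_perm,
      Fintype.card_sigma]
    simp only [Fintype.card_fin]
    congr 2
    calc ∑ t : Fin k, (t : ℕ)
        = ∑ i ∈ Finset.range k, i := Fin.sum_univ_eq_sum_range (fun i => i) k
      _ = k * (k - 1) / 2 := Finset.sum_range_id k
  have key := key_card n k a hn hk hak
  rw [hcard] at key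
  have hC : ((k * (k - 1) / 2 : ℕ) : ℝ) = (k : ℝ) * ((k : ℝ) - 1) / 2 := by
    have heven : Even (k * (k - 1)) := by
      rw [mul_comm]
      have h := Nat.even_mul_succ_self (k - 1)
      have hk1 : k - 1 + 1 = k := by omega
      rwa [hk1] at h
    have h2 : (k * (k - 1) / 2) * 2 = k * (k - 1) := Nat.div_mul_cancel heven.two_dvd
    have := congrArg (Nat.cast : ℕ → ℝ) h2
    push_cast [Nat.cast_sub (by omega : 1 ≤ k)] at this
    linarith
  rw [le_div_iff₀ (by positivity : (0 : ℝ) < (Nat.factorial a : ℝ))]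
  calc (Mcount n k a : ℝ) * (Nat.factorial a : ℝ)
      = ((Mcount n k a * Nat.factorial a : ℕ) : ℝ) := by push_cast; ring
    _ ≤ (((k * (k - 1) / 2) ^ a * (Nat.factorial n) ^ k : ℕ) : ℝ) := by exact_mod_cast key
    _ = (Nat.factorial n : ℝ) ^ k * ((k : ℝ) * ((k : ℝ) - 1) / 2) ^ a := by
        push_cast [hC]; ring

end Final

/-- For `n ≥ 1`, `k ≥ 2` and `0 ≤ a ≤ (k-1)n`, `M(a) ≤ (n!)^k (k(k-1)/2)^a / a!`. -/
theorem Mcount_le (n k a : ℕ) (hn : 1 ≤ n) (hk : 2 ≤ k) (ha : a ≤ (k - 1) * n) :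
    (Mcount n k a : ℝ)
      ≤ (Nat.factorial n : ℝ) ^ k * ((k : ℝ) * ((k : ℝ) - 1) / 2) ^ a
          / (Nat.factorial a : ℝ) := by
  exact Mcount_le' n k a hn hk ha
end

section
/- Let (k_n), (a_n), (t_n), (ℓ_n) be sequences of natural numbers with 2 ≤ t_n ≤ k_n, ℓ_n ≤ a_n, k_n² · a_n = o(n) and k_n² = o(n). Set d_n = n − ℓ_n − (t_n − 1) and D_n = n − ℓ_n. Then ( (d_n!)^{1/d_n} / (D_n!)^{1/D_n} )^{n − k_n a_n} · e^{t_n − 1} → 1 as n → ∞; that is, the gain factor ( (d!)^{1/d} / (D!)^{1/D} )^{n−ka} equals (1 + o(1)) e^{−(t−1)}. -/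
open Filter Real

lemma fact_le_mul_pow (n : ℕ) : ∀ m : ℕ, (n + m).factorial ≤ n.factorial * (n + m) ^ m := by
  intro m
  induction m with
  | zero => simp
  | succ m ih =>
      have h1 : (n + (m+1)).factorial = (n + m + 1) * (n + m).factorial := by
        rw [← Nat.add_assoc, Nat.factorial_succ]
      rw [h1]
      calc (n + m + 1) * (n + m).factorial
          ≤ (n + m + 1) * (n.factorial * (n + m) ^ m) := Nat.mul_le_mul_left _ ih
        _ ≤ (n + m + 1) * (n.factorial * (n + m + 1) ^ m) := by
            exact Nat.mul_le_mul_left _ (Nat.mul_le_mul_left _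
              (Nat.pow_le_pow_left (Nat.le_succ _) m))
        _ = n.factorial * (n + (m+1)) ^ (m+1) := by ring
  
lemma log_factorial_bounds : ∀ d : ℕ, 1 ≤ d →
    ((d:ℝ) * Real.log d - d + 1 ≤ Real.log (d.factorial) ∧
      Real.log (d.factorial) ≤ ((d:ℝ)+1) * Real.log ((d:ℝ)+1) - d) := by
  intro d hd
  induction d, hd using Nat.le_induction with
  | base =>
      constructor
      · simp [Nat.factorial]
      · simp only [Nat.factorial, Nat.cast_one]
        have h2 : (0.6931471803 : ℝ) < Real.log 2 := Real.log_two_gt_d9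
        norm_num
        nlinarith
  | succ d hd ih =>
      have hd1 : (1:ℝ) ≤ (d:ℝ) := by exact_mod_cast hd
      have hdpos : (0:ℝ) < d := by linarith
      have hfactpos : (0:ℝ) < (d.factorial : ℝ) := by
        exact_mod_cast d.factorial_pos
      have hlog : Real.log ((d+1 : ℕ).factorial) =
          Real.log ((d:ℝ)+1) + Real.log (d.factorial) := by
        rw [Nat.factorial_succ]
        push_cast
        rw [Real.log_mul (by positivity) (by positivity)]
      have hlogup : Real.log ((d:ℝ)+1) - Real.log d ≤ 1/d := by
        have := Real.log_le_sub_one_of_pos (show (0:ℝ) < ((d:ℝ)+1)/d by positivity)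
        rw [Real.log_div (by positivity) (by positivity)] at this
        have : ((d:ℝ)+1)/d - 1 = 1/d := by field_simp; ring
        linarith [Real.log_div (show ((d:ℝ)+1) ≠ 0 by positivity) (show (d:ℝ) ≠ 0 by positivity) ▸
          Real.log_le_sub_one_of_pos (show (0:ℝ) < ((d:ℝ)+1)/d by positivity), this]
      have hloglow : 1/((d:ℝ)+2) ≤ Real.log ((d:ℝ)+2) - Real.log ((d:ℝ)+1) := by
        have h := Real.one_sub_inv_le_log_of_pos (show (0:ℝ) < ((d:ℝ)+2)/((d:ℝ)+1) by positivity)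
        rw [Real.log_div (by positivity) (by positivity)] at h
        have : 1 - (((d:ℝ)+2)/((d:ℝ)+1))⁻¹ = 1/((d:ℝ)+2) := by
          rw [inv_div]; field_simp; norm_num
        linarith [this ▸ h]
      constructor
      · rw [hlog]
        push_cast
        have key : (d:ℝ) * (Real.log ((d:ℝ)+1) - Real.log d) ≤ 1 := by
          calc (d:ℝ) * (Real.log ((d:ℝ)+1) - Real.log d) ≤ (d:ℝ) * (1/d) := by
                apply mul_le_mul_of_nonneg_left hlogup (by positivity)
            _ = 1 := by field_simp
        nlinarith [ih.1]
      · rw [hlog]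
        push_cast
        have e : ((d:ℝ)+1+1) = (d:ℝ)+2 := by ring
        rw [e]
        have key : 1 ≤ ((d:ℝ)+2) * (Real.log ((d:ℝ)+2) - Real.log ((d:ℝ)+1)) := by
          calc (1:ℝ) = ((d:ℝ)+2) * (1/((d:ℝ)+2)) := by field_simp
            _ ≤ ((d:ℝ)+2) * (Real.log ((d:ℝ)+2) - Real.log ((d:ℝ)+1)) := by
                apply mul_le_mul_of_nonneg_left hloglow (by positivity)
        nlinarith [ih.2]

lemma log_sq_limit : Tendsto (fun x : ℝ => (1 + Real.log (x+1))^2 / x) atTop (nhds 0) := by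
  have h1 : Tendsto (fun x : ℝ => Real.log x ^ 1 / (1 * x + (-1))) atTop (nhds 0) :=
    Real.tendsto_pow_log_div_mul_add_atTop 1 (-1) 1 one_ne_zero
  have h2 : Tendsto (fun x : ℝ => Real.log x ^ 2 / (1 * x + (-1))) atTop (nhds 0) :=
    Real.tendsto_pow_log_div_mul_add_atTop 1 (-1) 2 one_ne_zero
  have hcomp : Tendsto (fun x : ℝ => x + 1) atTop atTop :=
    tendsto_atTop_add_const_right _ 1 tendsto_id
  have h1' := h1.comp hcomp
  have h2' := h2.comp hcomp
  have h0 : Tendsto (fun x : ℝ => x⁻¹) atTop (nhds 0) := tendsto_inv_atTop_zero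
  have hsum := (h0.add ((h1'.const_mul 2))).add h2'
  simp only [add_zero, mul_zero, zero_add] at hsum
  apply hsum.congr
  intro x
  have hx : 1 * (x + 1) + (-1) = x := by ring
  simp only [Function.comp_def, hx, pow_one]
  ring


set_option maxHeartbeats 1000000 in
/-- Let `(k_n), (a_n), (t_n), (ℓ_n)` be natural sequences with `2 ≤ t_n ≤ k_n`,
`ℓ_n ≤ a_n`, `k_n² a_n = o(n)` and `k_n² = o(n)`. Setting `d_n = n - ℓ_n - (t_n - 1)`
and `D_n = n - ℓ_n`, the gain factor satisfies
`((d_n!)^{1/d_n} / (D_n!)^{1/D_n})^{n - k_n a_n} = (1 + o(1)) e^{-(t_n - 1)}`,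
i.e. multiplied by `e^{t_n - 1}` it tends to `1`. -/
theorem gain_factor_asymptotic (k a t ℓ : ℕ → ℕ)
    (ht2 : ∀ n, 2 ≤ t n) (htk : ∀ n, t n ≤ k n) (hℓa : ∀ n, ℓ n ≤ a n)
    (hka : (fun n : ℕ => ((k n : ℝ)) ^ 2 * (a n : ℝ)) =o[atTop] (fun n : ℕ => (n : ℝ)))
    (hk2 : (fun n : ℕ => ((k n : ℝ)) ^ 2) =o[atTop] (fun n : ℕ => (n : ℝ))) :
    Tendsto (fun n : ℕ =>
        (((Nat.factorial (n - ℓ n - (t n - 1)) : ℝ)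
              ^ ((1 : ℝ) / ((n - ℓ n - (t n - 1) : ℕ) : ℝ)) /
            (Nat.factorial (n - ℓ n) : ℝ) ^ ((1 : ℝ) / ((n - ℓ n : ℕ) : ℝ)))
          ^ ((n : ℝ) - (k n : ℝ) * (a n : ℝ)))
        * Real.exp ((t n : ℝ) - 1))
      atTop (nhds 1) := by
  classical
  set g : ℕ → ℝ := fun n =>
    ((n : ℝ) - (k n : ℝ) * (a n : ℝ)) *
      (((1 : ℝ) / ((n - ℓ n - (t n - 1) : ℕ) : ℝ)) *
          Real.log (Nat.factorial (n - ℓ n - (t n - 1)) : ℝ) -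
        ((1 : ℝ) / ((n - ℓ n : ℕ) : ℝ)) * Real.log (Nat.factorial (n - ℓ n) : ℝ)) +
      ((t n : ℝ) - 1) with hgdef
  have hFg : ∀ n : ℕ,
      Real.exp (g n) =
        (((Nat.factorial (n - ℓ n - (t n - 1)) : ℝ)
              ^ ((1 : ℝ) / ((n - ℓ n - (t n - 1) : ℕ) : ℝ)) /
            (Nat.factorial (n - ℓ n) : ℝ) ^ ((1 : ℝ) / ((n - ℓ n : ℕ) : ℝ)))
          ^ ((n : ℝ) - (k n : ℝ) * (a n : ℝ)))
        * Real.exp ((t n : ℝ) - 1) := by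
    intro n
    have hx : (0:ℝ) < (Nat.factorial (n - ℓ n - (t n - 1)) : ℝ) := by
      exact_mod_cast Nat.factorial_pos _
    have hy : (0:ℝ) < (Nat.factorial (n - ℓ n) : ℝ) := by
      exact_mod_cast Nat.factorial_pos _
    rw [Real.rpow_def_of_pos hx, Real.rpow_def_of_pos hy, ← Real.exp_sub, ← Real.exp_mul,
      ← Real.exp_add]
    congr 1
    simp only [hgdef]
    ring
  suffices hG : Tendsto g atTop (nhds 0) by
    have hexp : Tendsto (fun n => Real.exp (g n)) atTop (nhds 1) := by
      have := (Real.continuous_exp.tendsto 0).comp hG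
      simpa [Function.comp_def] using this
    exact hexp.congr hFg
  set B : ℕ → ℝ := fun n =>
    2 * ((k n : ℝ) ^ 2 * (a n : ℝ) / (n : ℝ)) + 6 * ((k n : ℝ) ^ 2 / (n : ℝ)) +
      4 * ((1 + Real.log ((n : ℝ) + 1)) ^ 2 / (n : ℝ)) with hBdef
  have hB : Tendsto B atTop (nhds 0) := by
    have t1 := hka.tendsto_div_nhds_zero
    have t2 := hk2.tendsto_div_nhds_zero
    have t3 : Tendsto (fun n : ℕ => (1 + Real.log ((n : ℝ) + 1)) ^ 2 / (n : ℝ)) atTop (nhds 0) :=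
      log_sq_limit.comp tendsto_natCast_atTop_atTop
    have := ((t1.const_mul 2).add (t2.const_mul 6)).add (t3.const_mul 4)
    simpa using this
  apply squeeze_zero_norm' _ hB
  have e1 : ∀ᶠ n : ℕ in atTop, (k n : ℝ) ^ 2 * (a n : ℝ) / (n : ℝ) < 1/8 :=
    hka.tendsto_div_nhds_zero.eventually_lt_const (by norm_num)
  have e2 : ∀ᶠ n : ℕ in atTop, (k n : ℝ) ^ 2 / (n : ℝ) < 1/8 :=
    hk2.tendsto_div_nhds_zero.eventually_lt_const (by norm_num)
  filter_upwards [e1, e2, eventually_ge_atTop 2] with n h8a h8k hn2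
  simp only [hgdef, hBdef]
  -- cast facts, before abbreviating
  have hN2 : (2:ℝ) ≤ (n:ℝ) := by exact_mod_cast hn2
  have hK2 : (2:ℝ) ≤ (k n : ℝ) := by exact_mod_cast (ht2 n).trans (htk n)
  have hLA : ((ℓ n : ℕ) : ℝ) ≤ ((a n : ℕ) : ℝ) := by exact_mod_cast hℓa n
  have h2t : (2:ℝ) ≤ ((t n : ℕ) : ℝ) := by exact_mod_cast ht2 n
  have htKr : ((t n : ℕ) : ℝ) ≤ ((k n : ℕ) : ℝ) := by exact_mod_cast htk n
  set N := (n : ℝ) with hNdef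
  set K := (k n : ℝ) with hKdef
  set A := (a n : ℝ) with hAdef
  set Lr := (ℓ n : ℝ) with hLdef
  have hNpos : (0:ℝ) < N := by linarith
  have hA0 : (0:ℝ) ≤ A := by positivity
  have hL0 : (0:ℝ) ≤ Lr := by positivity
  have hK0 : (0:ℝ) ≤ K := by linarith
  set T := ((t n : ℕ) : ℝ) - 1 with hTdef
  have hT1 : (1:ℝ) ≤ T := by rw [hTdef]; linarith
  have hT0 : (0:ℝ) ≤ T := by linarith
  have hTK : T ≤ K := by rw [hTdef]; linarith
  have h8a' : K ^ 2 * A ≤ N / 8 := by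
    have := (div_lt_iff₀ hNpos).mp h8a; linarith
  have h8k' : K ^ 2 ≤ N / 8 := by
    have := (div_lt_iff₀ hNpos).mp h8k; linarith
  have hKN : K ≤ N / 16 := by
    have h := mul_le_mul_of_nonneg_right hK2 hK0
    linarith only [h, h8k']
  have hKA0 : (0:ℝ) ≤ K * A := by positivity
  have hAN : A ≤ N / 32 := by
    have h4 : (4:ℝ) ≤ K^2 := by
      have h := mul_le_mul_of_nonneg_right hK2 hK0
      have h2 : 2 * 2 ≤ 2 * K := by linarith only [hK2]
      nlinarith [h, h2]
    have h5 : 4 * A ≤ K^2 * A := mul_le_mul_of_nonneg_right h4 hA0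
    linarith only [h5, h8a', hA0]
  have hKA : K * A ≤ N / 16 := by
    have h : 2 * (K * A) ≤ K * (K * A) := mul_le_mul_of_nonneg_right hK2 hKA0
    linarith only [h, h8a']
  -- natural subtraction casts
  have hln : ℓ n ≤ n := by
    have h : Lr ≤ N := by linarith
    rw [hLdef, hNdef] at h
    exact_mod_cast h
  have hTcast : ((t n - 1 : ℕ) : ℝ) = T := by
    have h1 : 1 ≤ t n := le_trans one_le_two (ht2 n)
    rw [Nat.cast_sub h1, Nat.cast_one]
  have htln : t n - 1 ≤ n - ℓ n := by
    apply Nat.le_sub_of_add_le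
    have h : ((t n - 1 : ℕ) : ℝ) + Lr ≤ N := by rw [hTcast]; linarith
    rw [hLdef, hNdef] at h
    exact_mod_cast h
  have hDDc : ((n - ℓ n : ℕ) : ℝ) = N - Lr := by rw [Nat.cast_sub hln]
  have hddc : ((n - ℓ n - (t n - 1) : ℕ) : ℝ) = N - Lr - T := by
    rw [Nat.cast_sub htln, hDDc, hTcast]
  have hDDpos : (0:ℝ) < N - Lr := by linarith
  have hddge : N / 2 ≤ N - Lr - T := by linarith
  have hddpos : (0:ℝ) < N - Lr - T := by linarith
  have hdd1 : (1:ℝ) ≤ N - Lr - T := by linarith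
  have hddDD : N - Lr - T ≤ N - Lr := by linarith
  have hDDN : N - Lr ≤ N := by linarith
  have hdnat1 : 1 ≤ n - ℓ n - (t n - 1) := by
    have : (1:ℝ) ≤ ((n - ℓ n - (t n - 1) : ℕ) : ℝ) := by rw [hddc]; exact hdd1
    exact_mod_cast this
  rw [hddc, hDDc]
  set u := Real.log (Nat.factorial (n - ℓ n - (t n - 1)) : ℝ) with hudef
  set v := Real.log (Nat.factorial (n - ℓ n) : ℝ) with hvdef
  obtain ⟨hu1, hu2⟩ := log_factorial_bounds _ hdnat1
  rw [hddc] at hu1 hu2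
  rw [← hudef] at hu1 hu2
  have hfpos : (0:ℝ) < (Nat.factorial (n - ℓ n - (t n - 1)) : ℝ) := by
    exact_mod_cast Nat.factorial_pos _
  have hbpos : (0:ℝ) < ((n - ℓ n - (t n - 1) : ℕ) : ℝ) := by rw [hddc]; exact hddpos
  have hBpos : (0:ℝ) < ((n - ℓ n : ℕ) : ℝ) := by rw [hDDc]; exact hDDpos
  have hS1 : u + T * Real.log (N - Lr - T) ≤ v := by
    have hnat : (n - ℓ n - (t n - 1)).factorial * (n - ℓ n - (t n - 1)) ^ (t n - 1)
        ≤ (n - ℓ n).factorial := by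
      have h := Nat.factorial_mul_pow_sub_le_factorial
        (show n - ℓ n - (t n - 1) ≤ n - ℓ n from Nat.sub_le _ _)
      rwa [Nat.sub_sub_self htln] at h
    have hcast : (((n - ℓ n - (t n - 1)).factorial * (n - ℓ n - (t n - 1)) ^ (t n - 1) : ℕ) : ℝ)
        ≤ ((n - ℓ n).factorial : ℝ) := by exact_mod_cast hnat
    have h := Real.log_le_log (by positivity) hcast
    rw [Nat.cast_mul, Nat.cast_pow,
      Real.log_mul (ne_of_gt hfpos) (pow_ne_zero _ (ne_of_gt hbpos)), Real.log_pow,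
      hTcast, hddc] at h
    exact h
  have hS2 : v ≤ u + T * Real.log (N - Lr) := by
    have hnat : (n - ℓ n).factorial
        ≤ (n - ℓ n - (t n - 1)).factorial * (n - ℓ n) ^ (t n - 1) := by
      have h := fact_le_mul_pow (n - ℓ n - (t n - 1)) (t n - 1)
      rwa [Nat.sub_add_cancel htln] at h
    have hcast : (((n - ℓ n).factorial : ℕ) : ℝ)
        ≤ (((n - ℓ n - (t n - 1)).factorial * (n - ℓ n) ^ (t n - 1) : ℕ) : ℝ) := by
      exact_mod_cast hnat
    have h := Real.log_le_log (by positivity) hcast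
    rw [Nat.cast_mul, Nat.cast_pow,
      Real.log_mul (ne_of_gt hfpos) (pow_ne_zero _ (ne_of_gt hBpos)), Real.log_pow,
      hTcast, hDDc] at h
    exact h
  have hlogdd0 : (0:ℝ) ≤ Real.log (N - Lr - T) := Real.log_nonneg hdd1
  have hlogdd1 : (0:ℝ) ≤ Real.log (N - Lr - T + 1) := Real.log_nonneg (by linarith)
  have hlogN1 : (0:ℝ) ≤ Real.log (N + 1) := Real.log_nonneg (by linarith)
  have hm1 : (N - Lr - T) * (Real.log (N - Lr - T + 1) - Real.log (N - Lr - T)) ≤ 1 := by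
    have h := Real.log_le_sub_one_of_pos
      (show (0:ℝ) < (N - Lr - T + 1)/(N - Lr - T) by positivity)
    rw [Real.log_div (by positivity) (ne_of_gt hddpos)] at h
    have h2 : (N - Lr - T + 1)/(N - Lr - T) - 1 = 1/(N - Lr - T) := by field_simp; ring
    rw [h2] at h
    calc (N - Lr - T) * (Real.log (N - Lr - T + 1) - Real.log (N - Lr - T))
        ≤ (N - Lr - T) * (1/(N - Lr - T)) := mul_le_mul_of_nonneg_left h hddpos.le
      _ = 1 := by field_simp
  have hm2 : (N - Lr - T) * (Real.log (N - Lr) - Real.log (N - Lr - T)) ≤ T := by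
    have h := Real.log_le_sub_one_of_pos
      (show (0:ℝ) < (N - Lr)/(N - Lr - T) by positivity)
    rw [Real.log_div (ne_of_gt hDDpos) (ne_of_gt hddpos)] at h
    calc (N - Lr - T) * (Real.log (N - Lr) - Real.log (N - Lr - T))
        ≤ (N - Lr - T) * ((N - Lr)/(N - Lr - T) - 1) := mul_le_mul_of_nonneg_left h hddpos.le
      _ = T := by field_simp; ring
  set R := T * (u / (N - Lr - T)) - (v - u) + T with hRdef
  have hRmul : R * (N - Lr - T) = T * u - (v - u) * (N - Lr - T) + T * (N - Lr - T) := by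
    rw [hRdef]; field_simp
  have hRub : R ≤ T * (1 + Real.log (N - Lr - T + 1)) / (N - Lr - T) := by
    rw [le_div_iff₀ hddpos, hRmul]
    have c1 : (T * Real.log (N - Lr - T)) * (N - Lr - T) ≤ (v - u) * (N - Lr - T) :=
      mul_le_mul_of_nonneg_right (by linarith) hddpos.le
    have c2 : T * u ≤ T * (((N - Lr - T) + 1) * Real.log ((N - Lr - T) + 1) - (N - Lr - T)) :=
      mul_le_mul_of_nonneg_left hu2 hT0
    have c3 : T * ((N - Lr - T) * (Real.log (N - Lr - T + 1) - Real.log (N - Lr - T))) ≤ T * 1 :=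
      mul_le_mul_of_nonneg_left hm1 hT0
    linarith only [c1, c2, c3]
  have hRlb : -(T^2 / (N - Lr - T)) ≤ R := by
    have heq : -(T^2 / (N - Lr - T)) = -(T^2) / (N - Lr - T) := by ring
    rw [heq, div_le_iff₀ hddpos, hRmul]
    have c1 : (v - u) * (N - Lr - T) ≤ (T * Real.log (N - Lr)) * (N - Lr - T) :=
      mul_le_mul_of_nonneg_right (by linarith) hddpos.le
    have c2 : T * ((N - Lr - T) * Real.log (N - Lr - T) - (N - Lr - T) + 1) ≤ T * u :=
      mul_le_mul_of_nonneg_left hu1 hT0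
    have c3 : T * ((N - Lr - T) * (Real.log (N - Lr) - Real.log (N - Lr - T))) ≤ T * T :=
      mul_le_mul_of_nonneg_left hm2 hT0
    linarith only [c1, c2, c3, hT0, hT1, sq_nonneg T,
      mul_self_nonneg T]
  have hgid : (N - K * A) * ((1/(N - Lr - T)) * u - (1/(N - Lr)) * v) + T
      = T * (K * A - Lr)/(N - Lr) + ((N - K * A)/(N - Lr)) * R := by
    rw [hRdef]; field_simp; ring
  have hc0 : (0:ℝ) ≤ N - K * A := by linarith
  have hcDD : (N - K * A)/(N - Lr) ≤ 2 := by rw [div_le_iff₀ hDDpos]; linarith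
  have hcDD0 : (0:ℝ) ≤ (N - K * A)/(N - Lr) := div_nonneg hc0 hDDpos.le
  have hKAL0 : (0:ℝ) ≤ K * A - Lr := by
    have h : 1 * A ≤ K * A := mul_le_mul_of_nonneg_right (by linarith only [hK2]) hA0
    linarith only [h, hLA]
  have ht1a : (0:ℝ) ≤ T * (K * A - Lr)/(N - Lr) := by positivity
  have ht1b : T * (K * A - Lr)/(N - Lr) ≤ 2 * (K^2 * A/N) := by
    have s1 : T * (K * A - Lr) ≤ K^2 * A := by
      have m1 : T * (K * A - Lr) ≤ K * (K * A - Lr) := mul_le_mul_of_nonneg_right hTK hKAL0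
      have m2 : K * (K * A - Lr) ≤ K * (K * A) :=
        mul_le_mul_of_nonneg_left (by linarith only [hL0]) hK0
      linarith only [m1, m2]
    have d1 : T * (K * A - Lr)/(N - Lr) ≤ (K^2 * A)/(N/2) :=
      div_le_div₀ (by positivity) s1 (by linarith only [hNpos])
        (by linarith only [hLA, hAN, hNpos])
    have d2 : (K^2 * A)/(N/2) = 2 * (K^2 * A/N) := by field_simp
    rw [d2] at d1
    exact d1
  have hXnum0 : (0:ℝ) ≤ T * (1 + Real.log (N - Lr - T + 1)) :=
    mul_nonneg hT0 (by linarith)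
  have hX0 : (0:ℝ) ≤ T * (1 + Real.log (N - Lr - T + 1))/(N - Lr - T) :=
    div_nonneg hXnum0 hddpos.le
  have hQub : ((N - K * A)/(N - Lr)) * R
      ≤ 2 * (T * (1 + Real.log (N - Lr - T + 1))/(N - Lr - T)) := by
    calc ((N - K * A)/(N - Lr)) * R
        ≤ ((N - K * A)/(N - Lr)) * (T * (1 + Real.log (N - Lr - T + 1))/(N - Lr - T)) :=
          mul_le_mul_of_nonneg_left hRub hcDD0
      _ ≤ 2 * (T * (1 + Real.log (N - Lr - T + 1))/(N - Lr - T)) :=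
          mul_le_mul_of_nonneg_right hcDD hX0
  have hlogmonoN : Real.log (N - Lr - T + 1) ≤ Real.log (N + 1) :=
    Real.log_le_log (by linarith) (by linarith)
  have hXb : 2 * (T * (1 + Real.log (N - Lr - T + 1))/(N - Lr - T))
      ≤ 2 * (K^2/N) + 2 * ((1 + Real.log (N + 1))^2/N) := by
    have d1 : T * (1 + Real.log (N - Lr - T + 1))/(N - Lr - T)
        ≤ (K * (1 + Real.log (N + 1)))/(N/2) := by
      apply div_le_div₀ (by positivity) _ (by linarith) hddge
      exact mul_le_mul hTK (by linarith) (by linarith) hK0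
    have d2 : (K * (1 + Real.log (N + 1)))/(N/2) = 2 * (K * (1 + Real.log (N + 1)))/N := by
      field_simp
    have d3 : 2 * (K * (1 + Real.log (N + 1)))/N ≤ (K^2 + (1 + Real.log (N + 1))^2)/N := by
      rw [div_le_div_iff₀ hNpos hNpos]
      have hsq := sq_nonneg (K - (1 + Real.log (N + 1)))
      have := mul_le_mul_of_nonneg_right
        (show 2 * (K * (1 + Real.log (N + 1))) ≤ K^2 + (1 + Real.log (N + 1))^2 by
          linarith only [hsq]) hNpos.le
      linarith only [this]
    calc 2 * (T * (1 + Real.log (N - Lr - T + 1))/(N - Lr - T))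
        ≤ 2 * ((K * (1 + Real.log (N + 1)))/(N/2)) := by linarith
      _ = 2 * (2 * (K * (1 + Real.log (N + 1)))/N) := by rw [d2]
      _ ≤ 2 * ((K^2 + (1 + Real.log (N + 1))^2)/N) := by linarith
      _ = 2 * (K^2/N) + 2 * ((1 + Real.log (N + 1))^2/N) := by ring
  have hY0 : (0:ℝ) ≤ T^2/(N - Lr - T) := by positivity
  have hQlb : -(2 * (T^2/(N - Lr - T))) ≤ ((N - K * A)/(N - Lr)) * R := by
    have q1 : ((N - K * A)/(N - Lr)) * (-(T^2/(N - Lr - T)))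
        ≤ ((N - K * A)/(N - Lr)) * R := mul_le_mul_of_nonneg_left hRlb hcDD0
    have q2 : ((N - K * A)/(N - Lr)) * (T^2/(N - Lr - T)) ≤ 2 * (T^2/(N - Lr - T)) :=
      mul_le_mul_of_nonneg_right hcDD hY0
    linarith only [q1, q2]
  have hYb : 2 * (T^2/(N - Lr - T)) ≤ 4 * (K^2/N) := by
    have d1 : T^2/(N - Lr - T) ≤ K^2/(N/2) :=
      div_le_div₀ (by positivity) (pow_le_pow_left₀ hT0 hTK 2) (by linarith only [hNpos]) hddge
    have d2 : K^2/(N/2) = 2 * (K^2/N) := by field_simp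
    rw [d2] at d1; linarith
  have hb1 : (0:ℝ) ≤ K^2 * A/N := by positivity
  have hb2 : (0:ℝ) ≤ K^2/N := by positivity
  have hb3 : (0:ℝ) ≤ (1 + Real.log (N + 1))^2/N := by positivity
  rw [Real.norm_eq_abs, abs_le]
  constructor
  · rw [hgid]
    linarith only [ht1a, hQlb, hYb, hb1, hb2, hb3]
  · rw [hgid]
    linarith only [ht1b, hQub, hXb, hb2, hb3]
end

section
/- (Bregman–Minc inequality) Let G be a bipartite graph with color classes V = {v_1,…,v_n} and W = {w_1,…,w_n}, in which every vertex v_i has degree d(v_i) ≥ 1. Then the number M of perfect matchings of G satisfies M ≤ Π_{i=1}^n ( d(v_i)! )^{1/d(v_i)}. Equivalently, for an n×n matrix A with entries in {0,1} whose row sums r_1,…,r_n are all positive, perm(A) ≤ Π_{i=1}^n (r_i!)^{1/r_i}. -/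
open Finset Equiv Equiv.Perm Real

lemma bm_convexity {κ : Type*} (F : Finset κ) (t : κ → ℕ) (hF : 1 ≤ F.card) :
    ((∑ k ∈ F, t k : ℕ) : ℝ) ^ (∑ k ∈ F, t k) ≤
      (F.card : ℝ) ^ (∑ k ∈ F, t k) * ∏ k ∈ F, (t k : ℝ) ^ (t k) := by
  set s : ℕ := ∑ k ∈ F, t k with hs
  have hfac : ∀ k ∈ F, (0:ℝ) < (t k : ℝ) ^ (t k) := by
    intro k _
    rcases Nat.eq_zero_or_pos (t k) with h | h
    · simp [h]
    · positivity
  rcases Nat.eq_zero_or_pos s with h0 | hpos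
  · have hz : ∀ k ∈ F, t k = 0 := fun k hk =>
      (Finset.sum_eq_zero_iff.mp h0) k hk
    rw [h0]
    simp only [Nat.cast_zero, pow_zero]
    rw [Finset.prod_congr rfl (fun k hk => by rw [hz k hk])]
    simp
  · have hr : (0:ℝ) < F.card := by exact_mod_cast hF
    have hspos : (0:ℝ) < (s:ℝ) := by exact_mod_cast hpos
    have hL : (0:ℝ) < (s:ℝ) ^ s := by positivity
    have hProd : (0:ℝ) < ∏ k ∈ F, (t k : ℝ) ^ (t k) := Finset.prod_pos hfac
    have hR : (0:ℝ) < (F.card : ℝ) ^ s * ∏ k ∈ F, (t k : ℝ) ^ (t k) :=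
      mul_pos (by positivity) hProd
    rw [← Real.log_le_log_iff hL hR]
    rw [Real.log_mul (by positivity) hProd.ne', Real.log_pow, Real.log_pow,
      Real.log_prod (fun k hk => (hfac k hk).ne')]
    simp only [Real.log_pow]
    -- goal : s * log s ≤ s * log F.card + ∑ k in F, t k * log (t k)
    have jensen := (Real.convexOn_mul_log).map_sum_le
      (t := F) (w := fun _ => (F.card : ℝ)⁻¹) (p := fun k => (t k : ℝ))
      (fun i _ => by positivity)
      (by rw [Finset.sum_const, nsmul_eq_mul]; field_simp)
      (fun i _ => by simp [Set.mem_Ici])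
    simp only [smul_eq_mul] at jensen
    have hsum : ∑ i ∈ F, (F.card : ℝ)⁻¹ * (t i : ℝ) = (s:ℝ) / F.card := by
      rw [← Finset.mul_sum]
      push_cast [hs]
      ring
    rw [hsum] at jensen
    have h2 : (s:ℝ) / F.card * Real.log ((s:ℝ) / F.card)
        ≤ ∑ i ∈ F, (F.card:ℝ)⁻¹ * ((t i : ℝ) * Real.log (t i)) := jensen
    have h3 := mul_le_mul_of_nonneg_left h2 hr.le
    rw [Finset.mul_sum] at h3
    have h4 : (F.card:ℝ) * ((s:ℝ) / F.card * Real.log ((s:ℝ)/F.card))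
        = (s:ℝ) * (Real.log s - Real.log F.card) := by
      rw [Real.log_div hspos.ne' hr.ne']
      field_simp
    rw [h4] at h3
    have h5 : ∀ i ∈ F, (F.card:ℝ) * ((F.card:ℝ)⁻¹ * ((t i:ℝ) * Real.log (t i)))
        = (t i : ℝ) * Real.log (t i) := by
      intro i _
      field_simp
    rw [Finset.sum_congr rfl h5] at h3
    nlinarith [h3]


variable {α : Type} [Fintype α] [DecidableEq α]

lemma bm_minor_card (A : α → α → Bool) (i k : α) (hik : A i k = true) :
    (Finset.univ.filter (fun σ : Equiv.Perm α =>
        (∀ j, A j (σ j) = true) ∧ σ i = k)).card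
      = (Finset.univ.filter (fun τ : Equiv.Perm {x : α // x ≠ i} =>
          ∀ x : {x : α // x ≠ i}, A x.val ((Equiv.swap i k) (τ x).val) = true)).card := by
  apply Finset.card_bij'
    (i := fun σ hσ => Equiv.Perm.subtypePerm (Equiv.swap i k * σ)
      (by
        have hσ' := (Finset.mem_filter.mp hσ).2
        intro x
        constructor
        · intro hx hxi
          apply hx
          rw [hxi]
          simp [Equiv.Perm.mul_apply, hσ'.2]
        · intro hx hx'
          apply hx
          have : (Equiv.swap i k * σ) i = i := by
            simp [Equiv.Perm.mul_apply, hσ'.2]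
          exact (Equiv.injective _ (hx'.trans this.symm))))
    (j := fun τ hτ => Equiv.swap i k * Equiv.Perm.ofSubtype τ)
  case hi =>
    intro σ hσ
    obtain ⟨-, hσ2⟩ := Finset.mem_filter.mp hσ
    simp only [Finset.mem_filter, Finset.mem_univ, true_and]
    intro x
    simp [Equiv.Perm.subtypePerm_apply, Equiv.Perm.mul_apply, Equiv.swap_apply_self, hσ2.1]
  case hj =>
    intro τ hτ
    obtain ⟨-, hτ2⟩ := Finset.mem_filter.mp hτ
    simp only [Finset.mem_filter, Finset.mem_univ, true_and]
    constructor
    · intro j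
      rcases eq_or_ne j i with h | hj
      · subst h
        rw [Equiv.Perm.mul_apply,
          Equiv.Perm.ofSubtype_apply_of_not_mem (p := fun x => x ≠ j) τ (by simp),
          Equiv.swap_apply_left]
        exact hik
      · rw [Equiv.Perm.mul_apply, Equiv.Perm.ofSubtype_apply_of_mem (p := fun x => x ≠ i) τ hj]
        exact hτ2 ⟨j, hj⟩
    · rw [Equiv.Perm.mul_apply,
        Equiv.Perm.ofSubtype_apply_of_not_mem (p := fun x => x ≠ i) τ (by simp),
        Equiv.swap_apply_left]
  case left_inv =>
    intro σ hσ
    obtain ⟨-, hσ2⟩ := Finset.mem_filter.mp hσ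
    rw [Equiv.Perm.ofSubtype_subtypePerm _ (fun x hfx hxi => by
      subst hxi
      exact hfx (by simp [Equiv.Perm.mul_apply, hσ2.2])), Equiv.swap_mul_self_mul]
  case right_inv =>
    intro τ hτ
    apply Equiv.ext
    intro x
    have : Equiv.swap i k * (Equiv.swap i k * Equiv.Perm.ofSubtype τ) = Equiv.Perm.ofSubtype τ :=
      Equiv.swap_mul_self_mul _ _ _
    apply Subtype.ext
    rw [Equiv.Perm.subtypePerm_apply]
    simp only [this]
    rw [Equiv.Perm.ofSubtype_apply_of_mem (p := fun x => x ≠ i) τ x.2]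


lemma bm_minor_deg (A : α → α → Bool) (i k x : α) (hx : x ≠ i) :
    (Finset.univ.filter (fun y : {x : α // x ≠ i} =>
        A x ((Equiv.swap i k) y.val) = true)).card
      = (Finset.univ.filter (fun z => A x z = true)).card
          - (if A x k = true then 1 else 0) := by
  have step1 : (Finset.univ.filter (fun y : {x : α // x ≠ i} =>
      A x ((Equiv.swap i k) y.val) = true)).card
      = (Finset.univ.filter (fun z : α => z ≠ k ∧ A x z = true)).card := by
    apply Finset.card_bij' (i := fun y hy => (Equiv.swap i k) y.val)
      (j := fun z hz => ⟨(Equiv.swap i k) z, by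
        intro h
        have : z = k := by
          have := Equiv.injective (Equiv.swap i k) (a₁ := z) (a₂ := k)
          apply this
          rw [h, Equiv.swap_apply_right]
        exact (Finset.mem_filter.mp hz).2.1 this⟩)
    case hi =>
      intro y hy
      simp only [Finset.mem_filter, Finset.mem_univ, true_and]
      refine ⟨?_, (Finset.mem_filter.mp hy).2⟩
      intro h
      exact y.2 (Equiv.injective (Equiv.swap i k) (h.trans (Equiv.swap_apply_left i k).symm))
    case hj =>
      intro z hz
      simp only [Finset.mem_filter, Finset.mem_univ, true_and, Equiv.swap_apply_self]
      exact (Finset.mem_filter.mp hz).2.2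
    case left_inv =>
      intro y hy
      apply Subtype.ext
      simp [Equiv.swap_apply_self]
    case right_inv =>
      intro z hz
      simp [Equiv.swap_apply_self]
  rw [step1]
  have step2 : Finset.univ.filter (fun z : α => z ≠ k ∧ A x z = true)
      = (Finset.univ.filter (fun z => A x z = true)).erase k := by
    rw [← Finset.filter_ne' (Finset.univ.filter (fun z => A x z = true)) k,
      Finset.filter_filter]
    apply Finset.filter_congr
    intro z _
    tauto
  rw [step2]
  by_cases hk : A x k = true
  · rw [Finset.card_erase_of_mem (by simp [hk]), if_pos hk]
  · rw [Finset.erase_eq_of_notMem (by simp [hk]), if_neg hk]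
    simp


lemma bm_rpow_self (b : ℝ) (hb : 1 ≤ b) (c : ℕ) (hbc : c = 0 → b = 1) :
    (b ^ ((1:ℝ)/(c:ℝ))) ^ c = b := by
  rcases Nat.eq_zero_or_pos c with h | h
  · simp [h, hbc h]
  · rw [← Real.rpow_natCast (b ^ ((1:ℝ)/(c:ℝ))) c, ← Real.rpow_mul (by linarith)]
    rw [one_div, inv_mul_cancel₀ (by exact_mod_cast h.ne'), Real.rpow_one]

lemma bm_alg (c m : ℕ) (hc : 1 ≤ c) (hcm : c ≤ m) :
    (c:ℝ) * (((Nat.factorial (c-1) : ℝ)) ^ ((1:ℝ)/((c-1 : ℕ):ℝ))) ^ (c-1)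
      * ((Nat.factorial c : ℝ) ^ ((1:ℝ)/(c:ℝ))) ^ (m - c)
      = (Nat.factorial c : ℝ) ^ ((m:ℝ)/(c:ℝ)) := by
  have h1 : (((Nat.factorial (c-1) : ℝ)) ^ ((1:ℝ)/((c-1 : ℕ):ℝ))) ^ (c-1)
      = (Nat.factorial (c-1) : ℝ) := by
    apply bm_rpow_self _ (by exact_mod_cast Nat.one_le_iff_ne_zero.mpr (Nat.factorial_ne_zero _))
    intro h
    rw [h]
    simp
  rw [h1]
  have h2 : (c:ℝ) * (Nat.factorial (c-1) : ℝ) = (Nat.factorial c : ℝ) := by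
    rw [← Nat.cast_mul, Nat.mul_factorial_pred (by omega)]
  rw [mul_assoc] at *
  rw [← mul_assoc, h2]
  rw [← Real.rpow_natCast ((Nat.factorial c : ℝ) ^ ((1:ℝ)/(c:ℝ))) (m-c),
    ← Real.rpow_mul (by positivity)]
  nth_rewrite 1 [← Real.rpow_one (Nat.factorial c : ℝ)]
  rw [← Real.rpow_add (by positivity)]
  congr 1
  rw [Nat.cast_sub hcm]
  have hc0 : (c:ℝ) ≠ 0 := by positivity
  field_simp
  ring

lemma bm_general : ∀ (N : ℕ), ∀ (α : Type) [Fintype α] [DecidableEq α],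
    Fintype.card α = N → ∀ A : α → α → Bool,
    ((Finset.univ.filter (fun σ : Equiv.Perm α => ∀ i, A i (σ i) = true)).card : ℝ)
      ≤ ∏ i : α, ((Finset.univ.filter (fun j => A i j = true)).card.factorial : ℝ)
          ^ ((1:ℝ) / (((Finset.univ.filter (fun j => A i j = true)).card : ℕ) : ℝ)) := by
  intro N
  induction N using Nat.strong_induction_on with
  | _ N IH =>
  intro α _ _ hcard A
  classical
  set d : α → ℕ := fun i => (Finset.univ.filter (fun j => A i j = true)).card with hd
  set S : Finset (Equiv.Perm α) :=
    Finset.univ.filter (fun σ => ∀ i, A i (σ i) = true) with hS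
  set p : ℕ := S.card with hp
  have hdfac_pos : ∀ i : α, (0:ℝ) < ((d i).factorial : ℝ) := fun i => by
    exact_mod_cast (d i).factorial_pos
  have hRpos : (0:ℝ) < ∏ i : α, ((d i).factorial : ℝ) ^ ((1:ℝ)/((d i : ℕ):ℝ)) :=
    Finset.prod_pos fun i _ => Real.rpow_pos_of_pos (hdfac_pos i) _
  rcases Nat.eq_zero_or_pos p with hp0 | hppos
  · rw [hp0]
    exact_mod_cast hRpos.le
  rcases Nat.eq_zero_or_pos N with hN0 | hNpos
  · -- empty type
    have hcard0 : Fintype.card α = 0 := by omega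
    have : p ≤ 1 := by
      calc p ≤ Fintype.card (Equiv.Perm α) := by
              rw [hp]; exact (Finset.card_filter_le _ _).trans (by rw [Finset.card_univ])
        _ = (Fintype.card α).factorial := Fintype.card_perm
        _ = 1 := by rw [hcard0]; rfl
    have hempty : (Finset.univ : Finset α) = ∅ := by
      rw [← Finset.card_eq_zero, Finset.card_univ, hcard0]
    rw [hempty]
    simpa using (by exact_mod_cast this : (p:ℝ) ≤ 1)
  -- main case : N ≥ 1, p ≥ 1
  obtain ⟨σ₀, hσ₀⟩ := Finset.card_pos.mp hppos
  have hσ₀' : ∀ i, A i (σ₀ i) = true := (Finset.mem_filter.mp hσ₀).2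
  have hd1 : ∀ i, 1 ≤ d i := fun i =>
    Finset.card_pos.mpr ⟨σ₀ i, Finset.mem_filter.mpr ⟨Finset.mem_univ _, hσ₀' i⟩⟩
  have hdN : ∀ i, d i ≤ N := fun i => by
    rw [hd, ← hcard, ← Finset.card_univ]
    exact Finset.card_filter_le _ _
  set pik : α → α → ℕ := fun i k => (S.filter (fun σ => σ i = k)).card with hpik
  have hmapsto : ∀ i : α, ∀ σ ∈ S, σ i ∈ Finset.univ.filter (fun j => A i j = true) :=
    fun i σ hσ => Finset.mem_filter.mpr ⟨Finset.mem_univ _, (Finset.mem_filter.mp hσ).2 i⟩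
  have F1 : ∀ i, ∑ k ∈ Finset.univ.filter (fun j => A i j = true), pik i k = p :=
    fun i => (Finset.card_eq_sum_card_fiberwise (hmapsto i)).symm
  have F2 : ∀ i : α, (p:ℝ)^p ≤ (d i:ℝ)^p *
      ∏ k ∈ Finset.univ.filter (fun j => A i j = true), (pik i k:ℝ)^(pik i k) := by
    intro i
    have h := bm_convexity (Finset.univ.filter (fun j => A i j = true)) (pik i) (hd1 i)
    rw [F1 i] at h
    exact h
  have F3 : ∀ i : α, ∏ k ∈ Finset.univ.filter (fun j => A i j = true),
      (pik i k:ℝ)^(pik i k) = ∏ σ ∈ S, (pik i (σ i) : ℝ) := by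
    intro i
    rw [← Finset.prod_fiberwise_of_maps_to (hmapsto i) (fun σ => (pik i (σ i):ℝ))]
    refine Finset.prod_congr rfl (fun k hk => ?_)
    refine Eq.symm ?_
    calc ∏ σ ∈ S.filter (fun σ => σ i = k), (pik i (σ i):ℝ)
        = ∏ σ ∈ S.filter (fun σ => σ i = k), (pik i k:ℝ) :=
          Finset.prod_congr rfl (fun σ hσ => by rw [(Finset.mem_filter.mp hσ).2])
      _ = (pik i k:ℝ) ^ (pik i k) := by rw [Finset.prod_const]
  have F4 : (p:ℝ)^(N*p) ≤ ∏ σ ∈ S, ∏ i : α, ((d i : ℝ) * (pik i (σ i) : ℝ)) := by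
    have hL : (p:ℝ)^(N*p) = ∏ i : α, (p:ℝ)^p := by
      rw [Finset.prod_const, Finset.card_univ, hcard, ← pow_mul, mul_comm]
    rw [hL]
    calc ∏ i : α, (p:ℝ)^p
        ≤ ∏ i : α, ((d i:ℝ)^p * ∏ σ ∈ S, (pik i (σ i) : ℝ)) := by
          refine Finset.prod_le_prod (fun i _ => by positivity) (fun i _ => ?_)
          rw [← F3 i]
          exact F2 i
      _ = (∏ i : α, (d i:ℝ)^p) * ∏ i : α, ∏ σ ∈ S, (pik i (σ i) : ℝ) :=
          Finset.prod_mul_distrib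
      _ = (∏ i : α, ∏ σ ∈ S, (d i:ℝ)) * ∏ σ ∈ S, ∏ i : α, (pik i (σ i) : ℝ) := by
          rw [Finset.prod_comm (s := S) (t := Finset.univ)]
          congr 1
          exact Finset.prod_congr rfl (fun i _ => by rw [Finset.prod_const])
      _ = (∏ σ ∈ S, ∏ i : α, (d i:ℝ)) * ∏ σ ∈ S, ∏ i : α, (pik i (σ i) : ℝ) := by
          rw [Finset.prod_comm (s := Finset.univ) (t := S)]
      _ = ∏ σ ∈ S, ((∏ i : α, (d i:ℝ)) * ∏ i : α, (pik i (σ i) : ℝ)) :=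
          Finset.prod_mul_distrib.symm
      _ = ∏ σ ∈ S, ∏ i : α, ((d i : ℝ) * (pik i (σ i) : ℝ)) :=
          Finset.prod_congr rfl (fun σ _ => Finset.prod_mul_distrib.symm)
  have F6 : ∀ σ ∈ S, ∀ i : α, (pik i (σ i) : ℝ) ≤
      ∏ j ∈ Finset.univ.erase i,
        ((d j - (if A j (σ i) = true then 1 else 0)).factorial : ℝ)
          ^ ((1:ℝ)/(((d j - (if A j (σ i) = true then 1 else 0)) : ℕ):ℝ)) := by
    intro σ hσ i
    have hik : A i (σ i) = true := (Finset.mem_filter.mp hσ).2 i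
    have hsub : Fintype.card {x : α // x ≠ i} = N - 1 := by
      have h1 : Fintype.card {x : α // x ≠ i}
          = Fintype.card α - Fintype.card {x : α // x = i} :=
        Fintype.card_subtype_compl _
      rw [h1, hcard, Fintype.card_subtype_eq]
    have hlt : N - 1 < N := by omega
    have hcard_eq : pik i (σ i)
        = (Finset.univ.filter (fun τ : Equiv.Perm {x : α // x ≠ i} =>
          ∀ x : {x : α // x ≠ i},
            A x.val ((Equiv.swap i (σ i)) (τ x).val) = true)).card := by
      show (S.filter (fun τ => τ i = σ i)).card = _
      rw [hS, Finset.filter_filter]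
      exact bm_minor_card A i (σ i) hik
    have IH' := IH (N-1) hlt {x : α // x ≠ i} hsub
      (fun x y => A x.val ((Equiv.swap i (σ i)) y.val))
    rw [← hcard_eq] at IH'
    refine IH'.trans (le_of_eq ?_)
    have hdeg : ∀ x : {x : α // x ≠ i},
        (Finset.univ.filter (fun y : {x : α // x ≠ i} =>
          A x.val ((Equiv.swap i (σ i)) y.val) = true)).card
        = d x.val - (if A x.val (σ i) = true then 1 else 0) := fun x =>
      bm_minor_deg A i (σ i) x.val x.2
    calc ∏ x : {x : α // x ≠ i},
          (((Finset.univ.filter (fun y : {x : α // x ≠ i} =>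
            A x.val ((Equiv.swap i (σ i)) y.val) = true)).card).factorial : ℝ)
            ^ ((1:ℝ)/(((Finset.univ.filter (fun y : {x : α // x ≠ i} =>
              A x.val ((Equiv.swap i (σ i)) y.val) = true)).card : ℕ):ℝ))
        = ∏ x : {x : α // x ≠ i},
            ((d x.val - (if A x.val (σ i) = true then 1 else 0)).factorial : ℝ)
              ^ ((1:ℝ)/(((d x.val - (if A x.val (σ i) = true then 1 else 0)) : ℕ):ℝ)) :=
          Finset.prod_congr rfl (fun x _ => by rw [hdeg x])
      _ = ∏ j ∈ Finset.univ.erase i,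
            ((d j - (if A j (σ i) = true then 1 else 0)).factorial : ℝ)
              ^ ((1:ℝ)/(((d j - (if A j (σ i) = true then 1 else 0)) : ℕ):ℝ)) :=
          (Finset.prod_subtype (p := fun x : α => x ≠ i) (Finset.univ.erase i)
            (fun x => by simp)
            (fun j => ((d j - (if A j (σ i) = true then 1 else 0)).factorial : ℝ)
              ^ ((1:ℝ)/(((d j - (if A j (σ i) = true then 1 else 0)) : ℕ):ℝ)))).symm
  have hcount : ∀ σ ∈ S, ∀ j : α,
      ((Finset.univ.erase j).filter (fun i => A j (σ i) = true)).card = d j - 1 := by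
    intro σ hσ j
    have hσ' := (Finset.mem_filter.mp hσ).2
    have hbij : ((Finset.univ.erase j).filter (fun i => A j (σ i) = true)).card
        = ((Finset.univ.filter (fun z => A j z = true)).erase (σ j)).card := by
      apply Finset.card_bij (i := fun i _ => σ i)
      · intro i hi
        obtain ⟨hi1, hi2⟩ := Finset.mem_filter.mp hi
        refine Finset.mem_erase.mpr ⟨?_, Finset.mem_filter.mpr ⟨Finset.mem_univ _, hi2⟩⟩
        intro h
        exact (Finset.mem_erase.mp hi1).1 (σ.injective h)
      · intro a _ b _ hab
        exact σ.injective hab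
      · intro z hz
        obtain ⟨hz1, hz2⟩ := Finset.mem_erase.mp hz
        refine ⟨σ.symm z, ?_, by simp⟩
        refine Finset.mem_filter.mpr ⟨Finset.mem_erase.mpr ⟨?_, Finset.mem_univ _⟩, ?_⟩
        · intro h
          apply hz1
          rw [← h]
          simp
        · rw [Equiv.apply_symm_apply]
          exact (Finset.mem_filter.mp hz2).2
    rw [hbij, Finset.card_erase_of_mem (a := σ j)
      (s := Finset.univ.filter (fun z => A j z = true))
      (Finset.mem_filter.mpr ⟨Finset.mem_univ _, hσ' j⟩)]
  have F7 : ∀ σ ∈ S, ∏ i : α, ((d i : ℝ) * (pik i (σ i) : ℝ))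
      ≤ ∏ j : α, ((d j).factorial : ℝ) ^ ((N:ℝ)/(d j : ℝ)) := by
    intro σ hσ
    calc ∏ i : α, ((d i : ℝ) * (pik i (σ i) : ℝ))
        ≤ ∏ i : α, ((d i : ℝ) * ∏ j ∈ Finset.univ.erase i,
            ((d j - (if A j (σ i) = true then 1 else 0)).factorial : ℝ)
              ^ ((1:ℝ)/(((d j - (if A j (σ i) = true then 1 else 0)) : ℕ):ℝ))) := by
          refine Finset.prod_le_prod (fun i _ => by positivity) (fun i _ => ?_)
          exact mul_le_mul_of_nonneg_left (F6 σ hσ i) (Nat.cast_nonneg _)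
      _ = (∏ i : α, (d i : ℝ)) * ∏ i : α, ∏ j ∈ Finset.univ.erase i,
            ((d j - (if A j (σ i) = true then 1 else 0)).factorial : ℝ)
              ^ ((1:ℝ)/(((d j - (if A j (σ i) = true then 1 else 0)) : ℕ):ℝ)) :=
          Finset.prod_mul_distrib
      _ = (∏ j : α, (d j : ℝ)) * ∏ j : α, ∏ i ∈ Finset.univ.erase j,
            ((d j - (if A j (σ i) = true then 1 else 0)).factorial : ℝ)
              ^ ((1:ℝ)/(((d j - (if A j (σ i) = true then 1 else 0)) : ℕ):ℝ)) := by
          congr 1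
          refine Finset.prod_comm' (fun x y => ?_)
          simp only [Finset.mem_univ, Finset.mem_erase, true_and, and_true]
          exact ⟨fun h => Ne.symm h, fun h => Ne.symm h⟩
      _ = ∏ j : α, ((d j : ℝ) * ∏ i ∈ Finset.univ.erase j,
            ((d j - (if A j (σ i) = true then 1 else 0)).factorial : ℝ)
              ^ ((1:ℝ)/(((d j - (if A j (σ i) = true then 1 else 0)) : ℕ):ℝ))) :=
          Finset.prod_mul_distrib.symm
      _ = ∏ j : α, ((d j).factorial : ℝ) ^ ((N:ℝ)/(d j : ℝ)) := by
          refine Finset.prod_congr rfl (fun j _ => ?_)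
          rw [← Finset.prod_filter_mul_prod_filter_not (Finset.univ.erase j)
            (fun i => A j (σ i) = true)]
          have h1 : ∏ i ∈ (Finset.univ.erase j).filter (fun i => A j (σ i) = true),
              ((d j - (if A j (σ i) = true then 1 else 0)).factorial : ℝ)
                ^ ((1:ℝ)/(((d j - (if A j (σ i) = true then 1 else 0)) : ℕ):ℝ))
              = (((d j - 1).factorial : ℝ)
                  ^ ((1:ℝ)/(((d j - 1) : ℕ):ℝ))) ^ (d j - 1) := by
            rw [Finset.prod_congr rfl (fun i hi => by
              rw [if_pos (Finset.mem_filter.mp hi).2]), Finset.prod_const,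
              hcount σ hσ j]
          have hcnt2 : ((Finset.univ.erase j).filter
              (fun i => ¬ (A j (σ i) = true))).card = N - d j := by
            have hsum := Finset.card_filter_add_card_filter_not
              (s := Finset.univ.erase j) (p := fun i => A j (σ i) = true)
            rw [hcount σ hσ j, Finset.card_erase_of_mem (Finset.mem_univ j),
              Finset.card_univ, hcard] at hsum
            have := hd1 j
            have := hdN j
            omega
          have h2 : ∏ i ∈ (Finset.univ.erase j).filter (fun i => ¬ (A j (σ i) = true)),
              ((d j - (if A j (σ i) = true then 1 else 0)).factorial : ℝ)
                ^ ((1:ℝ)/(((d j - (if A j (σ i) = true then 1 else 0)) : ℕ):ℝ))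
              = (((d j).factorial : ℝ) ^ ((1:ℝ)/((d j : ℕ):ℝ))) ^ (N - d j) := by
            rw [Finset.prod_congr rfl (fun i hi => by
              rw [if_neg (Finset.mem_filter.mp hi).2, Nat.sub_zero]),
              Finset.prod_const, hcnt2]
          rw [h1, h2, ← mul_assoc]
          exact bm_alg (d j) N (hd1 j) (hdN j)
  have hfinal : (p:ℝ)^(N*p)
      ≤ (∏ i : α, ((d i).factorial : ℝ) ^ ((1:ℝ)/((d i : ℕ):ℝ)))^(N*p) := by
    calc (p:ℝ)^(N*p) ≤ ∏ σ ∈ S, ∏ i : α, ((d i : ℝ) * (pik i (σ i) : ℝ)) := F4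
      _ ≤ ∏ σ ∈ S, ∏ j : α, ((d j).factorial : ℝ) ^ ((N:ℝ)/(d j : ℝ)) :=
          Finset.prod_le_prod
            (fun σ _ => Finset.prod_nonneg (fun i _ => by positivity)) F7
      _ = (∏ j : α, ((d j).factorial : ℝ) ^ ((N:ℝ)/(d j : ℝ)))^p := by
          rw [Finset.prod_const]
      _ = ((∏ i : α, ((d i).factorial : ℝ) ^ ((1:ℝ)/((d i : ℕ):ℝ)))^N)^p := by
          congr 1
          rw [← Finset.prod_pow]
          refine Finset.prod_congr rfl (fun j _ => ?_)
          rw [← Real.rpow_natCast (((d j).factorial : ℝ) ^ ((1:ℝ)/((d j : ℕ):ℝ))) N,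
            ← Real.rpow_mul (by positivity)]
          congr 1
          rw [one_div]
          ring
      _ = (∏ i : α, ((d i).factorial : ℝ) ^ ((1:ℝ)/((d i : ℕ):ℝ)))^(N*p) := by
          rw [← pow_mul]
  have hNp : N * p ≠ 0 := by positivity
  exact le_of_pow_le_pow_left₀ hNp hRpos.le hfinal


/-- **Bregman–Minc inequality.** Let `G` be a bipartite graph on color classes
`V = W = [n]`, given by its 0–1 biadjacency matrix `A` (here `A i j = true` iff
`v_i w_j` is an edge), in which every vertex `v_i` of `V` has degree
`d i = #{j : A i j} ≥ 1`. Then the number of perfect matchings (equivalently, the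
permanent of the biadjacency matrix) satisfies `M ≤ Π_i (d i !)^(1 / d i)`. -/
theorem bregman_minc (n : ℕ) (A : Fin n → Fin n → Bool)
    (d : Fin n → ℕ)
    (hd : ∀ i, d i = (Finset.univ.filter (fun j => A i j = true)).card)
    (hd1 : ∀ i, 1 ≤ d i) :
    (((Finset.univ.filter
        (fun σ : Equiv.Perm (Fin n) => ∀ i, A i (σ i) = true)).card : ℝ))
      ≤ ∏ i : Fin n, (Nat.factorial (d i) : ℝ) ^ ((1 : ℝ) / (d i : ℝ)) := by
  have h := bm_general n (Fin n) (by simp) A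
  refine le_trans (le_of_eq ?_) (h.trans (le_of_eq ?_))
  · congr!
  · exact Finset.prod_congr rfl (fun i _ => by rw [hd i])
end
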